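/- arXiv:2009.08142 — 4 statements merged into one kernel-verified Lean document; each statement's English description precedes it below -/
import Mathlib

section
/- Let Δ > 0 and p > 0. Let (I_k)_{k≥1} be an IID sequence of {0,1}-valued random variables on a probability space with P(I_1 = 1) = Δ/(Δ+p). Let (α_k)_{k≥1} be a sequence of positive reals with α_k/k → 0 as k → ∞. Define Î_k = Σ_{j=1}^k I_j and x_k = p·Î_k/(k + α_k − Î_k) for k ≥ 1. Then x_k → Δ almost surely as k → ∞. -/
open MeasureTheory ProbabilityTheory Filter

open scoped Classical in
lemma bern_preimage_measure {Ω : Type*} [MeasurableSpace Ω] (P : Measure Ω)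
    [IsProbabilityMeasure P] (f : Ω → ℝ) (hf : Measurable f)
    (h01 : ∀ ω, f ω = 0 ∨ f ω = 1) (s : Set ℝ) :
    P (f ⁻¹' s) = (if (1:ℝ) ∈ s then P {ω | f ω = 1} else 0)
      + (if (0:ℝ) ∈ s then P {ω | f ω = 1}ᶜ else 0) := by
  set A : Set Ω := {ω | f ω = 1} with hA
  have hAm : MeasurableSet A := hf (measurableSet_singleton 1)
  have h1 : f ⁻¹' s ∩ A = if (1:ℝ) ∈ s then A else ∅ := by
    ext ω
    simp only [Set.mem_inter_iff, Set.mem_preimage, hA, Set.mem_setOf_eq]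
    by_cases h : (1:ℝ) ∈ s
    · simp only [h, if_true, Set.mem_setOf_eq]
      exact ⟨fun hh => hh.2, fun hh => ⟨hh ▸ h, hh⟩⟩
    · simp only [h, if_false, Set.mem_empty_iff_false, iff_false, not_and]
      intro h1 h2; exact h (h2 ▸ h1)
  have h2 : f ⁻¹' s \ A = if (0:ℝ) ∈ s then Aᶜ else ∅ := by
    ext ω
    have hω : ω ∈ Aᶜ ↔ f ω = 0 := by
      simp only [hA, Set.mem_compl_iff, Set.mem_setOf_eq]
      rcases h01 ω with h | h <;> simp [h]
    simp only [Set.mem_diff, Set.mem_preimage, ← Set.mem_compl_iff, hω]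
    by_cases h : (0:ℝ) ∈ s
    · simp only [h, if_true, hω]
      exact ⟨fun hh => hh.2, fun hh => ⟨hh ▸ h, hh⟩⟩
    · simp only [h, if_false, Set.mem_empty_iff_false, iff_false, not_and]
      intro h1 h2; exact h (h2 ▸ h1)
  have hsum := measure_inter_add_diff (μ := P) (f ⁻¹' s) hAm
  rw [h1, h2] at hsum
  rw [← hsum]
  by_cases h : (1:ℝ) ∈ s <;> by_cases h' : (0:ℝ) ∈ s <;> simp [h, h']

/-- **LLN estimator: almost sure convergence.**
`I k` stands for the indicator `I_{k+1}` of the paper (so the IID family is indexed by `ℕ`),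
hence `∑ j in Finset.range k, I j = Σ_{j=1}^k I_j` and `x k = p·Î_k/(k + α_k − Î_k)`. -/
theorem lln_estimator_as_convergence
    {Ω : Type*} [MeasurableSpace Ω] (P : Measure Ω) [IsProbabilityMeasure P]
    (Δ p : ℝ) (hΔ : 0 < Δ) (hp : 0 < p)
    (I : ℕ → Ω → ℝ)
    (hmeas : ∀ k, Measurable (I k))
    (h01 : ∀ k ω, I k ω = 0 ∨ I k ω = 1)
    (hindep : iIndepFun I P)
    (hP : ∀ k, P {ω | I k ω = 1} = ENNReal.ofReal (Δ / (Δ + p)))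
    (α : ℕ → ℝ) (hα : ∀ k, 0 < α k)
    (hα0 : Tendsto (fun k => α k / k) atTop (nhds 0))
    (x : ℕ → Ω → ℝ)
    (hx : ∀ k ω, 1 ≤ k →
      x k ω = p * (∑ j ∈ Finset.range k, I j ω) / (k + α k - ∑ j ∈ Finset.range k, I j ω)) :
    ∀ᵐ ω ∂P, Tendsto (fun k => x k ω) atTop (nhds Δ) := by
  set μr : ℝ := Δ / (Δ + p) with hμr
  have hΔp : 0 < Δ + p := by linarith
  have hμr0 : 0 < μr := div_pos hΔ hΔp
  have hμr1 : μr < 1 := by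
    rw [hμr, div_lt_one hΔp]; linarith
  -- identical distribution
  have hident : ∀ k, IdentDistrib (I k) (I 0) P P := by
    intro k
    have hc : ∀ m, P {ω | I m ω = 1}ᶜ = 1 - ENNReal.ofReal μr := by
      intro m
      have hm : MeasurableSet {ω | I m ω = 1} := hmeas m (measurableSet_singleton 1)
      rw [prob_compl_eq_one_sub hm, hP m]
    refine ⟨(hmeas k).aemeasurable, (hmeas 0).aemeasurable, ?_⟩
    ext s hs
    rw [Measure.map_apply (hmeas k) hs, Measure.map_apply (hmeas 0) hs,
      bern_preimage_measure P (I k) (hmeas k) (h01 k) s,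
      bern_preimage_measure P (I 0) (hmeas 0) (h01 0) s, hP k, hP 0, hc k, hc 0]
  -- integrability
  have hbound : ∀ k ω, ‖I k ω‖ ≤ 1 := by
    intro k ω; rcases h01 k ω with h | h <;> simp [h]
  have hint : Integrable (I 0) P :=
    (integrable_const (1:ℝ)).mono' (hmeas 0).aestronglyMeasurable
      (Filter.Eventually.of_forall (hbound 0))
  -- expectation
  have hexp : P[I 0] = μr := by
    have hA : MeasurableSet {ω | I 0 ω = 1} := (hmeas 0) (measurableSet_singleton 1)
    have hI0 : I 0 = Set.indicator {ω | I 0 ω = 1} (fun _ => (1:ℝ)) := by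
      funext ω
      rcases h01 0 ω with h | h
      · rw [h, Set.indicator_of_notMem]
        simp [Set.mem_setOf_eq, h]
      · rw [h, Set.indicator_of_mem]
        exact h
    rw [hI0, integral_indicator_const _ hA, measureReal_def, hP 0, smul_eq_mul, mul_one,
      ENNReal.toReal_ofReal hμr0.le]
  -- strong law
  have hSLLN := strong_law_ae_real I hint
    (fun i j hij => hindep.indepFun hij) hident
  rw [hexp] at hSLLN
  filter_upwards [hSLLN] with ω hω
  set S : ℕ → ℝ := fun k => ∑ j ∈ Finset.range k, I j ω with hS
  have hSk : ∀ k, S k ≤ k := by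
    intro k
    calc S k ≤ ∑ _j ∈ Finset.range k, (1:ℝ) := by
          refine Finset.sum_le_sum fun j _ => ?_
          rcases h01 j ω with h | h <;> simp [h]
      _ = k := by simp
  -- limit of the transformed sequence
  have hden_ne : (1:ℝ) + 0 - μr ≠ 0 := by
    intro h; nlinarith
  have hlim : Tendsto (fun k : ℕ => p * (S k / k) / (1 + α k / k - S k / k)) atTop
      (nhds (p * μr / (1 + 0 - μr))) := by
    refine Tendsto.div ((tendsto_const_nhds).mul hω) ?_ hden_ne
    exact ((tendsto_const_nhds).add hα0).sub hω
  have hval : p * μr / (1 + 0 - μr) = Δ := by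
    rw [hμr]
    field_simp
    have hpp : (Δ + p) * (1 + 0) - Δ = p := by ring
    rw [hpp, div_self hp.ne']
  rw [hval] at hlim
  refine hlim.congr' ?_
  filter_upwards [eventually_ge_atTop 1] with k hk
  have hk0 : (k:ℝ) ≠ 0 := by
    have : (1:ℝ) ≤ (k:ℝ) := by exact_mod_cast hk
    linarith
  have hden2 : (k:ℝ) + α k - S k ≠ 0 := by
    have := hSk k
    have := hα k
    intro h; linarith
  rw [hx k ω hk]
  field_simp
  exact (mul_div_cancel_left₀ _ hden2).symm
end

section
/- Let Δ > 0 and p > 0. Let (I_k)_{k≥1} be an IID sequence of {0,1}-valued random variables with P(I_1 = 1) = Δ/(Δ+p), let (α_k)_{k≥1} be positive reals with α_k/k → 0 and log(k/α_k)/k → 0 as k → ∞, and set x_k = p·Î_k/(k + α_k − Î_k) with Î_k = Σ_{j=1}^k I_j. Then E|x_k − Δ| = O(max{k^{−1/2}, α_k/k}); i.e., there exist C > 0 and K ≥ 1 such that for all k ≥ K, E|x_k − Δ| ≤ C·max{k^{−1/2}, α_k/k}. -/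
open MeasureTheory ProbabilityTheory Filter

set_option maxHeartbeats 4000000 in
/-- **LLN estimator: convergence rate in expected error.**
`I k` stands for the indicator `I_{k+1}` of the paper (so the IID family is indexed by `ℕ`),
hence `∑ j ∈ Finset.range k, I j = Σ_{j=1}^k I_j` and `x k = p·Î_k/(k + α_k − Î_k)`.
The conclusion is `E|x_k − Δ| ≤ C·max{k^{−1/2}, α_k/k}` for all `k ≥ K`. -/
theorem lln_estimator_rate
    {Ω : Type*} [MeasurableSpace Ω] (P : Measure Ω) [IsProbabilityMeasure P]
    (Δ p : ℝ) (hΔ : 0 < Δ) (hp : 0 < p)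
    (I : ℕ → Ω → ℝ)
    (hmeas : ∀ k, Measurable (I k))
    (h01 : ∀ k ω, I k ω = 0 ∨ I k ω = 1)
    (hindep : iIndepFun I P)
    (hP : ∀ k, P {ω | I k ω = 1} = ENNReal.ofReal (Δ / (Δ + p)))
    (α : ℕ → ℝ) (hα : ∀ k, 0 < α k)
    (hα0 : Tendsto (fun k => α k / k) atTop (nhds 0))
    (hαlog : Tendsto (fun k => Real.log (k / α k) / k) atTop (nhds 0))
    (x : ℕ → Ω → ℝ)
    (hx : ∀ k ω, 1 ≤ k →
      x k ω = p * (∑ j ∈ Finset.range k, I j ω) / (k + α k - ∑ j ∈ Finset.range k, I j ω)) :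
    ∃ C > 0, ∃ K : ℕ, 1 ≤ K ∧ ∀ k, K ≤ k →
      ∫ ω, |x k ω - Δ| ∂P ≤ C * max ((k : ℝ) ^ (-(1 : ℝ) / 2)) (α k / k) := by
  classical
  have hΔp : 0 < Δ + p := by linarith
  set μ : ℝ := Δ / (Δ + p) with hμdef
  have hμ0 : 0 < μ := div_pos hΔ hΔp
  have hμ1 : μ < 1 := (div_lt_one hΔp).2 (by linarith)
  have h1μ : 0 < 1 - μ := by linarith
  have hΔeq : p * μ / (1 - μ) = Δ := by
    rw [hμdef]; rw [hμdef] at h1μ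
    field_simp
    rw [show Δ + p - Δ = p by ring, div_self hp.ne']
  set δ : ℝ := (1 - μ) / 2 with hδdef
  have hδ0 : 0 < δ := by positivity
  set t : ℝ := min 1 (δ / (2 * μ)) with htdef
  have ht0 : 0 < t := lt_min one_pos (by positivity)
  have ht1 : t ≤ 1 := min_le_left _ _
  have htμ : μ * t ≤ δ / 2 := by
    have h2 : t ≤ δ / (2 * μ) := min_le_right _ _
    rw [le_div_iff₀ (by positivity)] at h2
    nlinarith
  set c : ℝ := t * δ / 2 with hcdef
  have hc0 : 0 < c := by positivity
  -- basic facts about I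
  have hI0 : ∀ j ω, 0 ≤ I j ω := by
    intro j ω; rcases h01 j ω with h | h <;> rw [h] <;> norm_num
  have hI1 : ∀ j ω, I j ω ≤ 1 := by
    intro j ω; rcases h01 j ω with h | h <;> rw [h] <;> norm_num
  have hIint : ∀ j, Integrable (I j) P := by
    intro j
    refine Integrable.mono' (integrable_const 1) (hmeas j).aestronglyMeasurable ?_
    filter_upwards with ω
    rw [Real.norm_eq_abs, abs_of_nonneg (hI0 j ω)]; exact hI1 j ω
  have hImem : ∀ j, MemLp (I j) 2 P := by
    intro j
    refine MemLp.of_bound (hmeas j).aestronglyMeasurable 1 ?_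
    filter_upwards with ω
    rw [Real.norm_eq_abs, abs_of_nonneg (hI0 j ω)]; exact hI1 j ω
  have hEI : ∀ j, ∫ ω, I j ω ∂P = μ := by
    intro j
    have hset : MeasurableSet {ω | I j ω = 1} :=
      measurableSet_eq_fun (hmeas j) measurable_const
    have hrepr : I j = Set.indicator {ω | I j ω = 1} (fun _ => (1 : ℝ)) := by
      funext ω
      rcases h01 j ω with h | h
      · rw [h, Set.indicator_of_notMem]
        simp [Set.mem_setOf_eq, h]
      · rw [h, Set.indicator_of_mem]
        exact h
    rw [hrepr, integral_indicator_const (1 : ℝ) hset, measureReal_def, hP j,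
      ENNReal.toReal_ofReal hμ0.le, smul_eq_mul, mul_one]
  have hVarI : ∀ j, variance (I j) P = μ - μ ^ 2 := by
    intro j
    rw [variance_eq_sub (hImem j)]
    have hsq : (I j ^ 2 : Ω → ℝ) = I j := by
      funext ω
      rcases h01 j ω with h | h <;> simp [h]
    rw [hsq, hEI j]
  -- the partial sums
  set S : ℕ → Ω → ℝ := fun k ω => ∑ j ∈ Finset.range k, I j ω with hSdef
  have hSsum : ∀ k, S k = ∑ j ∈ Finset.range k, I j := by
    intro k; funext ω; simp [hSdef, Finset.sum_apply]
  have hSmeas : ∀ k, Measurable (S k) := by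
    intro k; exact Finset.measurable_sum _ fun j _ => hmeas j
  have hS0 : ∀ k ω, 0 ≤ S k ω := by
    intro k ω; exact Finset.sum_nonneg fun j _ => hI0 j ω
  have hSk : ∀ k ω, S k ω ≤ k := by
    intro k ω
    calc S k ω ≤ ∑ j ∈ Finset.range k, 1 := Finset.sum_le_sum fun j _ => hI1 j ω
    _ = k := by simp
  have hSint : ∀ k, Integrable (S k) P := by
    intro k; exact integrable_finset_sum _ fun j _ => hIint j
  have hSmem : ∀ k, MemLp (S k) 2 P := by
    intro k; rw [hSsum k]; exact memLp_finset_sum' _ fun j _ => hImem j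
  have hES : ∀ k, ∫ ω, S k ω ∂P = k * μ := by
    intro k
    rw [show (fun ω => S k ω) = fun ω => ∑ j ∈ Finset.range k, I j ω from rfl]
    rw [integral_finset_sum _ fun j _ => hIint j]
    simp [hEI, mul_comm]
  have hVarS : ∀ k, variance (S k) P = k * (μ - μ ^ 2) := by
    intro k
    rw [hSsum k, IndepFun.variance_sum (fun j _ => hImem j)
      (fun i _ j _ hij => hindep.indepFun hij)]
    simp [hVarI, mul_comm]
    ring
  have hEY2 : ∀ k, ∫ ω, (S k ω - k * μ) ^ 2 ∂P = k * (μ - μ ^ 2) := by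
    intro k
    have h := variance_eq_integral (μ := P) (hSmeas k).aemeasurable
    rw [hVarS k] at h
    simp only [Pi.pow_apply, Pi.sub_apply, hES k] at h
    exact h.symm
  have hEabsY : ∀ k : ℕ, 1 ≤ k → ∫ ω, |S k ω - k * μ| ∂P ≤ Real.sqrt k := by
    intro k hk
    have hk0 : (0:ℝ) < k := by exact_mod_cast hk
    set r := Real.sqrt k with hrdef
    have hr0 : 0 < r := Real.sqrt_pos.2 hk0
    have hr2 : r ^ 2 = k := Real.sq_sqrt hk0.le
    have hY2int : Integrable (fun ω => (S k ω - k * μ) ^ 2) P := by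
      have := ((hSmem k).sub (memLp_const (k * μ))).integrable_sq
      simpa using this
    have hYint : Integrable (fun ω => |S k ω - k * μ|) P :=
      ((hSint k).sub (integrable_const _)).abs
    have hpt : ∀ ω, |S k ω - k * μ| ≤ r / 2 + (S k ω - k * μ) ^ 2 / (2 * r) := by
      intro ω
      set y := S k ω - k * μ with hydef
      rw [div_add_div _ _ two_ne_zero (by positivity), le_div_iff₀ (by positivity)]
      nlinarith [sq_nonneg (|y| - r), sq_abs y]
    calc ∫ ω, |S k ω - k * μ| ∂P ≤ ∫ ω, (r / 2 + (S k ω - k * μ) ^ 2 / (2 * r)) ∂P :=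
          integral_mono hYint ((integrable_const _).add (hY2int.div_const _)) hpt
      _ = r / 2 + (∫ ω, (S k ω - k * μ) ^ 2 ∂P) / (2 * r) := by
          rw [integral_add (integrable_const _) (hY2int.div_const _), integral_const,
            integral_div]
          simp
      _ ≤ r := by
          rw [hEY2 k]
          have h1 : (k : ℝ) * (μ - μ ^ 2) ≤ k := by nlinarith
          have h2 : (k:ℝ) * (μ - μ ^ 2) / (2*r) ≤ r / 2 := by
            rw [div_le_div_iff₀ (by positivity) (by positivity)]
            nlinarith
          linarith
  -- Chernoff bound
  have hChern : ∀ k : ℕ,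
      (P {ω | (k : ℝ) * (μ + δ) ≤ S k ω}).toReal ≤ Real.exp (-(c * k)) := by
    intro k
    have hint : ∀ j ∈ Finset.range k, Integrable (fun ω => Real.exp (t * I j ω)) P := by
      intro j _
      refine Integrable.mono' (integrable_const (Real.exp t)) ?_ ?_
      · exact (((hmeas j).const_mul t).exp).aestronglyMeasurable
      · filter_upwards with ω
        rw [Real.norm_eq_abs, abs_of_pos (Real.exp_pos _), Real.exp_le_exp]
        nlinarith [hI1 j ω, hI0 j ω, ht0]
    have hintS : Integrable (fun ω => Real.exp (t * S k ω)) P := by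
      have h2 := hindep.integrable_exp_mul_sum hmeas (s := Finset.range k) hint
      simpa [hSdef, Finset.sum_apply] using h2
    have hmgfI : ∀ j, mgf (I j) P t = 1 + (Real.exp t - 1) * μ := by
      intro j
      have hfun : (fun ω => Real.exp (t * I j ω)) = fun ω => 1 + (Real.exp t - 1) * I j ω := by
        funext ω
        rcases h01 j ω with h | h <;> rw [h] <;> simp
      rw [mgf, hfun, integral_add (integrable_const _) ((hIint j).const_mul _), integral_const,
        integral_const_mul, hEI j]
      simp
    have hmgfS : mgf (S k) P t = (1 + (Real.exp t - 1) * μ) ^ k := by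
      rw [hSsum k, hindep.mgf_sum hmeas (Finset.range k)]
      simp [hmgfI, Finset.prod_const]
    have hb := measure_ge_le_exp_mul_mgf (X := S k) (μ := P) ((k:ℝ) * (μ + δ)) ht0.le hintS
    rw [hmgfS] at hb
    refine hb.trans ?_
    have hbase0 : 0 ≤ 1 + (Real.exp t - 1) * μ := by
      nlinarith [Real.add_one_le_exp t, ht0, hμ0]
    have hbase : 1 + (Real.exp t - 1) * μ ≤ Real.exp ((Real.exp t - 1) * μ) := by
      linarith [Real.add_one_le_exp ((Real.exp t - 1) * μ)]
    calc Real.exp (-t * ((k:ℝ)*(μ+δ))) * (1 + (Real.exp t - 1) * μ) ^ k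
        ≤ Real.exp (-t * ((k:ℝ)*(μ+δ))) * Real.exp ((Real.exp t - 1) * μ) ^ k := by
          gcongr
      _ = Real.exp (-t * ((k:ℝ)*(μ+δ)) + k * ((Real.exp t - 1) * μ)) := by
          rw [← Real.exp_nat_mul, ← Real.exp_add]
      _ ≤ Real.exp (-(c * k)) := by
          rw [Real.exp_le_exp]
          have hexpt : Real.exp t ≤ 1 + t + t ^ 2 := by
            have h := Real.exp_bound' ht0.le ht1 (n := 2) (by norm_num)
            norm_num [Finset.sum_range_succ] at h
            nlinarith [sq_nonneg t, h]
          have hkey : (Real.exp t - 1) * μ - t * (μ + δ) ≤ -c := by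
            have h3 : (Real.exp t - 1) * μ ≤ t * μ + t * (δ/2) := by
              nlinarith [ht0.le, hμ0.le]
            rw [hcdef]; nlinarith [ht0.le, hδ0.le]
          nlinarith [mul_le_mul_of_nonneg_left hkey (Nat.cast_nonneg (α := ℝ) k)]
  -- tail estimates for the eventuality
  have hlogk : Tendsto (fun k : ℕ => Real.log k / k) atTop (nhds 0) := by
    have h1 : Tendsto (fun x : ℝ => Real.log x / x) atTop (nhds 0) := by
      have := Real.isLittleO_log_id_atTop.tendsto_div_nhds_zero
      simpa using this
    exact h1.comp tendsto_natCast_atTop_atTop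
  have hφ : Tendsto (fun k : ℕ => Real.log (p + Δ) / k +
      (Real.log (k / α k) / k + (1/2) * (Real.log k / k))) atTop (nhds 0) := by
    have h2 := (tendsto_const_div_atTop_nhds_zero_nat (Real.log (p + Δ))).add
      (hαlog.add (hlogk.const_mul (1/2)))
    simpa [mul_comm] using h2
  have hev1 : ∀ᶠ k : ℕ in atTop, α k / k < 1 := hα0.eventually (gt_mem_nhds one_pos)
  have hev2 : ∀ᶠ k : ℕ in atTop, Real.log (p + Δ) / k +
      (Real.log (k / α k) / k + (1/2) * (Real.log k / k)) < c :=
    hφ.eventually (gt_mem_nhds hc0)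
  obtain ⟨K₀, hK₀⟩ := eventually_atTop.mp (hev1.and hev2)
  -- conclusion
  refine ⟨4 * p / (1 - μ) ^ 2 + 1, by positivity, max K₀ 1, le_max_right _ _, ?_⟩
  intro k hk
  have hk1 : 1 ≤ k := le_trans (le_max_right _ _) hk
  have hkK₀ : K₀ ≤ k := le_trans (le_max_left _ _) hk
  obtain ⟨hcond1, hcond2⟩ := hK₀ k hkK₀
  have hk0 : (0:ℝ) < k := by exact_mod_cast hk1
  have hαk : α k < k := by rwa [div_lt_one hk0] at hcond1
  -- basic facts about x k
  have hDpos : ∀ ω, 0 < ↑k + α k - S k ω := by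
    intro ω; have := hSk k ω; have := hα k; linarith
  have hxω : ∀ ω, x k ω = p * S k ω / (↑k + α k - S k ω) := fun ω => hx k ω hk1
  have hx0 : ∀ ω, 0 ≤ x k ω := by
    intro ω; rw [hxω ω]
    exact div_nonneg (mul_nonneg hp.le (hS0 k ω)) (hDpos ω).le
  have hxle : ∀ ω, x k ω ≤ p * k / α k := by
    intro ω; rw [hxω ω]
    refine div_le_div₀ (mul_nonneg hp.le (Nat.cast_nonneg k))
      (mul_le_mul_of_nonneg_left (hSk k ω) hp.le) (hα k) ?_
    have := hSk k ω; linarith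
  have hBmeas : MeasurableSet {ω | (k : ℝ) * (μ + δ) ≤ S k ω} :=
    measurableSet_le measurable_const (hSmeas k)
  -- pointwise bound
  have hpw : ∀ ω, |x k ω - Δ| ≤ 2*p/((1-μ)^2*↑k) * (|S k ω - ↑k*μ| + μ * α k)
      + Set.indicator {ω | (k : ℝ) * (μ + δ) ≤ S k ω} (fun _ => p*↑k/α k + Δ) ω := by
    intro ω
    have hh₁ : 0 ≤ 2*p/((1-μ)^2*↑k) * (|S k ω - ↑k*μ| + μ * α k) := by
      apply mul_nonneg (div_nonneg (by linarith) (by positivity))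
      exact add_nonneg (abs_nonneg _) (mul_nonneg hμ0.le (hα k).le)
    by_cases hω : ω ∈ {ω | (k : ℝ) * (μ + δ) ≤ S k ω}
    · rw [Set.indicator_of_mem hω]
      have h8 : 0 ≤ p * ↑k / α k :=
        div_nonneg (mul_nonneg hp.le (Nat.cast_nonneg k)) (hα k).le
      rcases abs_cases (x k ω - Δ) with ⟨he, _⟩ | ⟨he, _⟩ <;>
        [linarith [hxle ω]; linarith [hx0 ω]]
    · rw [Set.indicator_of_notMem hω, add_zero]
      have hSlt : S k ω < ↑k * (μ + δ) := by
        simpa [not_le] using hω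
      have hδk : (k:ℝ) * δ = ↑k * (1 - μ) / 2 := by rw [hδdef]; ring
      have hD2 : (k:ℝ) * (1 - μ) / 2 ≤ ↑k + α k - S k ω := by
        nlinarith [hα k, hSlt, hδk]
      have hiden : x k ω - Δ = p * (S k ω - μ*(↑k + α k)) / ((1-μ)*(↑k + α k - S k ω)) := by
        rw [hxω ω, ← hΔeq]
        have hDne : (↑k + α k - S k ω) ≠ 0 := (hDpos ω).ne'
        field_simp
        ring
      rw [hiden, abs_div, abs_of_pos (mul_pos h1μ (hDpos ω)), abs_mul, abs_of_pos hp]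
      have hgoal : 2*p/((1-μ)^2*↑k) * (|S k ω - ↑k*μ| + μ * α k)
          = p * (|S k ω - ↑k*μ| + μ * α k) / ((1-μ)^2*↑k/2) := by
        field_simp
      rw [hgoal]
      have htri : |S k ω - μ*(↑k + α k)| ≤ |S k ω - ↑k*μ| + μ * α k := by
        have h9 : S k ω - μ*(↑k + α k) = (S k ω - ↑k*μ) - μ * α k := by ring
        rw [h9]
        refine (abs_sub _ _).trans ?_
        rw [abs_of_nonneg (mul_nonneg hμ0.le (hα k).le)]
      refine div_le_div₀ (mul_nonneg hp.le (le_trans (abs_nonneg _) htri))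
        (mul_le_mul_of_nonneg_left htri hp.le) (by positivity) ?_
      nlinarith [hD2, h1μ]
  -- integrability
  have hxm : Measurable (x k) := by
    rw [show x k = fun ω => p * S k ω / (↑k + α k - S k ω) from funext hxω]
    exact (measurable_const.mul (hSmeas k)).div (measurable_const.sub (hSmeas k))
  have h8 : 0 ≤ p * ↑k / α k :=
    div_nonneg (mul_nonneg hp.le (Nat.cast_nonneg k)) (hα k).le
  have hxint : Integrable (fun ω => |x k ω - Δ|) P := by
    refine Integrable.mono' (integrable_const (p*↑k/α k + Δ))
      ((hxm.sub measurable_const).abs.aestronglyMeasurable) ?_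
    filter_upwards with ω
    rw [Real.norm_eq_abs, abs_abs]
    rcases abs_cases (x k ω - Δ) with ⟨he, _⟩ | ⟨he, _⟩ <;>
      [linarith [hxle ω]; linarith [hx0 ω]]
  have hYint : Integrable (fun ω => |S k ω - ↑k * μ|) P :=
    ((hSint k).sub (integrable_const _)).abs
  have hh1int : Integrable (fun ω => 2*p/((1-μ)^2*↑k) * (|S k ω - ↑k*μ| + μ * α k)) P :=
    (hYint.add (integrable_const _)).const_mul _
  have hh2int : Integrable
      (Set.indicator {ω | (k : ℝ) * (μ + δ) ≤ S k ω} (fun _ => p*↑k/α k + Δ)) P :=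
    (integrable_const _).indicator hBmeas
  -- the two integrals
  have hint1 : ∫ ω, 2*p/((1-μ)^2*↑k) * (|S k ω - ↑k*μ| + μ * α k) ∂P
      ≤ 2*p/((1-μ)^2*↑k) * (Real.sqrt ↑k + μ * α k) := by
    rw [integral_const_mul, integral_add hYint (integrable_const _), integral_const]
    simp only [measure_univ, ENNReal.toReal_one, smul_eq_mul, one_mul, probReal_univ]
    refine mul_le_mul_of_nonneg_left ?_ (div_nonneg (by linarith) (by positivity))
    have := hEabsY k hk1
    linarith
  have hint2 : ∫ ω, Set.indicator {ω | (k : ℝ) * (μ + δ) ≤ S k ω}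
      (fun _ => p*↑k/α k + Δ) ω ∂P
      ≤ Real.exp (-(c*↑k)) * (p*↑k/α k + Δ) := by
    rw [integral_indicator_const _ hBmeas, smul_eq_mul]
    exact mul_le_mul_of_nonneg_right (hChern k) (by linarith)
  -- algebra : sqrt k / k = k ^ (-1/2)
  have hsqrtk : Real.sqrt ↑k / ↑k = (k:ℝ) ^ (-(1:ℝ)/2) := by
    have hes : (-(1:ℝ)/2) = 1/2 - 1 := by norm_num
    rw [hes, Real.rpow_sub hk0, Real.rpow_one, Real.sqrt_eq_rpow]
  -- Chernoff contribution is at most k^(-1/2)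
  have hchern2 : Real.exp (-(c*↑k)) * (p*↑k/α k + Δ) ≤ (k:ℝ) ^ (-(1:ℝ)/2) := by
    have hk_α : 1 ≤ (k:ℝ)/α k := (one_le_div (hα k)).2 hαk.le
    have h5 : p*↑k/α k + Δ ≤ (p+Δ)*(↑k/α k) := by
      have hpe : p*↑k/α k = p*(↑k/α k) := by ring
      nlinarith [hk_α, hΔ.le, hp.le]
    have h6 : Real.exp (-(c*↑k)) * ((p+Δ)*(↑k/α k)) ≤ (k:ℝ) ^ (-(1:ℝ)/2) := by
      rw [Real.rpow_def_of_pos hk0]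
      have hlhs : Real.exp (-(c*↑k)) * ((p+Δ)*(↑k/α k))
          = Real.exp (-(c*↑k) + (Real.log (p+Δ) + Real.log (↑k/α k))) := by
        rw [Real.exp_add, Real.exp_add, Real.exp_log (by linarith),
          Real.exp_log (div_pos hk0 (hα k))]
      rw [hlhs, Real.exp_le_exp]
      have h7 : Real.log (p+Δ) + Real.log (↑k/α k) + (1/2)*Real.log ↑k < c * ↑k := by
        have heq : Real.log (p+Δ)/↑k + (Real.log (↑k/α k)/↑k + (1/2)*(Real.log ↑k/↑k))
            = (Real.log (p+Δ) + Real.log (↑k/α k) + (1/2)*Real.log ↑k)/↑k := by ring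
        rw [heq] at hcond2
        exact (div_lt_iff₀ hk0).1 hcond2
      linarith
    calc Real.exp (-(c*↑k)) * (p*↑k/α k + Δ)
        ≤ Real.exp (-(c*↑k)) * ((p+Δ)*(↑k/α k)) :=
          mul_le_mul_of_nonneg_left h5 (Real.exp_pos _).le
      _ ≤ (k:ℝ) ^ (-(1:ℝ)/2) := h6
  -- put everything together
  have hsplit : ∫ ω, |x k ω - Δ| ∂P
      ≤ 2*p/((1-μ)^2*↑k) * (Real.sqrt ↑k + μ * α k) + (k:ℝ) ^ (-(1:ℝ)/2) := by
    calc ∫ ω, |x k ω - Δ| ∂P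
        ≤ ∫ ω, (2*p/((1-μ)^2*↑k) * (|S k ω - ↑k*μ| + μ * α k)
          + Set.indicator {ω | (k : ℝ) * (μ + δ) ≤ S k ω} (fun _ => p*↑k/α k + Δ) ω) ∂P :=
          integral_mono hxint (hh1int.add hh2int) hpw
      _ = (∫ ω, 2*p/((1-μ)^2*↑k) * (|S k ω - ↑k*μ| + μ * α k) ∂P)
          + ∫ ω, Set.indicator {ω | (k : ℝ) * (μ + δ) ≤ S k ω}
            (fun _ => p*↑k/α k + Δ) ω ∂P := integral_add hh1int hh2int
      _ ≤ _ := by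
          have := hint2.trans hchern2
          linarith [hint1]
  have hA : 2*p/((1-μ)^2*↑k) * (Real.sqrt ↑k + μ*α k)
      = 2*p/(1-μ)^2 * (Real.sqrt ↑k/↑k + μ*(α k/↑k)) := by
    field_simp
  set M := max ((k:ℝ) ^ (-(1:ℝ)/2)) (α k / ↑k) with hMdef
  have hM1 : (k:ℝ) ^ (-(1:ℝ)/2) ≤ M := le_max_left _ _
  have hM2 : α k / ↑k ≤ M := le_max_right _ _
  have hM0 : 0 ≤ α k / ↑k := div_nonneg (hα k).le hk0.le
  have hcoef : (0:ℝ) ≤ 2*p/(1-μ)^2 := div_nonneg (by linarith) (by positivity)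
  have hB : 2*p/(1-μ)^2 * (Real.sqrt ↑k/↑k + μ*(α k/↑k)) ≤ 2*p/(1-μ)^2 * (M + M) := by
    refine mul_le_mul_of_nonneg_left ?_ hcoef
    rw [hsqrtk]
    have hμα : μ*(α k/↑k) ≤ α k/↑k := by nlinarith [hM0]
    linarith
  calc ∫ ω, |x k ω - Δ| ∂P
      ≤ 2*p/((1-μ)^2*↑k) * (Real.sqrt ↑k + μ * α k) + (k:ℝ) ^ (-(1:ℝ)/2) := hsplit
    _ ≤ 2*p/(1-μ)^2 * (M + M) + M := by rw [hA]; linarith [hB, hM1]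
    _ = (4 * p / (1 - μ) ^ 2 + 1) * M := by ring
end

section
/- Let Δ > 0 and p > 0. Let (I_k)_{k≥1} be an IID sequence of {0,1}-valued random variables with P(I_1 = 1) = Δ/(Δ+p). Let (η_k)_{k≥0} be positive reals with Σ_{k≥0} η_k = ∞ and Σ_{k≥0} η_k² < ∞. Fix any y_0 ∈ ℝ and define recursively y_{k+1} = y_k + η_k·[I_{k+1}(y_k + p) − y_k] for k ≥ 0. Then y_k → Δ almost surely as k → ∞. -/
open MeasureTheory ProbabilityTheory Filter



lemma sa_det_w (c : ℝ) (hc : 0 < c) (η : ℕ → ℝ) (hηpos : ∀ k, 0 < η k)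
    (hdiv : Tendsto (fun n => ∑ k ∈ Finset.range n, η k) atTop atTop)
    (hη0 : Tendsto η atTop (nhds 0))
    (t : ℕ → ℝ) (ht : Tendsto t atTop (nhds 0))
    (w : ℕ → ℝ) (hw : ∀ k, w (k + 1) = (1 - c * η k) * w k + c * η k * t k) :
    Tendsto w atTop (nhds 0) := by
  rw [Metric.tendsto_atTop]
  intro ε hε
  have hη1 : ∀ᶠ k in atTop, η k ≤ 1 / c :=
    hη0.eventually (eventually_le_nhds (by positivity))
  have ht' : ∀ᶠ k in atTop, |t k| ≤ ε / 3 := by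
    have : Tendsto (fun k => |t k|) atTop (nhds 0) := by
      simpa using ht.abs
    exact this.eventually (eventually_le_nhds (by positivity))
  obtain ⟨K, hK⟩ := (hη1.and ht').exists_forall_of_atTop
  have hfac : ∀ k, K ≤ k → 0 ≤ 1 - c * η k := by
    intro k hk
    have h1 := (hK k hk).1
    have h2 : c * η k ≤ c * (1 / c) := mul_le_mul_of_nonneg_left h1 hc.le
    rw [mul_one_div, div_self hc.ne'] at h2
    linarith
  have hprod_nonneg : ∀ n, 0 ≤ ∏ k ∈ Finset.Ico K n, (1 - c * η k) := by
    intro n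
    exact Finset.prod_nonneg fun k hk => hfac k (Finset.mem_Ico.1 hk).1
  have hkey : ∀ n, K ≤ n →
      |w n| ≤ ε / 3 + (∏ k ∈ Finset.Ico K n, (1 - c * η k)) * |w K| := by
    intro n hn
    induction n, hn using Nat.le_induction with
    | base => simp; linarith [abs_nonneg (w K)]
    | succ n hn ih =>
      have hPn := hprod_nonneg n
      have hfn := hfac n hn
      have htn := (hK n hn).2
      have hηn := (hηpos n).le
      have h1 : |w (n + 1)| ≤ (1 - c * η n) * |w n| + c * η n * |t n| := by
        rw [hw n]
        calc |(1 - c * η n) * w n + c * η n * t n|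
            ≤ |(1 - c * η n) * w n| + |c * η n * t n| := abs_add_le _ _
          _ = (1 - c * η n) * |w n| + c * η n * |t n| := by
              rw [abs_mul, abs_mul, abs_of_nonneg hfn, abs_of_nonneg (mul_nonneg hc.le hηn)]
      rw [Finset.prod_Ico_succ_top hn]
      have habsK := abs_nonneg (w K)
      nlinarith [abs_nonneg (w n), mul_le_mul_of_nonneg_left ih hfn,
        mul_le_mul_of_nonneg_left htn (mul_nonneg hc.le hηn)]
  -- the product tends to 0
  have hbound : ∀ n, K ≤ n → (∏ k ∈ Finset.Ico K n, (1 - c * η k)) ≤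
      Real.exp (-(c * ((∑ k ∈ Finset.range n, η k) - ∑ k ∈ Finset.range K, η k))) := by
    intro n hn
    have h1 : (∏ k ∈ Finset.Ico K n, (1 - c * η k)) ≤
        ∏ k ∈ Finset.Ico K n, Real.exp (-(c * η k)) := by
      refine Finset.prod_le_prod (fun k hk => hfac k (Finset.mem_Ico.1 hk).1) ?_
      intro k _
      linarith [Real.add_one_le_exp (-(c * η k))]
    rw [← Real.exp_sum] at h1
    refine h1.trans_eq ?_
    congr 1
    rw [← Finset.sum_Ico_eq_sub _ hn, Finset.mul_sum, ← Finset.sum_neg_distrib]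
  have hA : Tendsto (fun n => (∑ k ∈ Finset.range n, η k) - ∑ k ∈ Finset.range K, η k)
      atTop atTop := tendsto_atTop_add_const_right _ _ hdiv
  have hexp : Tendsto (fun n => Real.exp
      (-(c * ((∑ k ∈ Finset.range n, η k) - ∑ k ∈ Finset.range K, η k)))) atTop (nhds 0) :=
    Real.tendsto_exp_atBot.comp (tendsto_neg_atTop_atBot.comp (hA.const_mul_atTop hc))
  have hsq : Tendsto (fun n => (∏ k ∈ Finset.Ico K n, (1 - c * η k)) * |w K|) atTop (nhds 0) := by
    refine squeeze_zero' ?_ ?_ (by simpa using hexp.mul_const |w K|)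
    · exact Eventually.of_forall fun n => mul_nonneg (hprod_nonneg n) (abs_nonneg _)
    · filter_upwards [eventually_ge_atTop K] with n hn
      exact mul_le_mul_of_nonneg_right (hbound n hn) (abs_nonneg _)
  have hlt : ∀ᶠ n in atTop, (∏ k ∈ Finset.Ico K n, (1 - c * η k)) * |w K| < ε / 3 :=
    hsq.eventually (eventually_lt_nhds (by positivity))
  obtain ⟨N, hN⟩ := ((eventually_ge_atTop K).and hlt).exists_forall_of_atTop
  refine ⟨N, fun n hn => ?_⟩
  obtain ⟨hn1, hn2⟩ := hN n hn
  have := hkey n hn1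
  rw [Real.dist_eq, sub_zero]
  linarith

lemma sa_det (c : ℝ) (hc : 0 < c) (η : ℕ → ℝ) (hηpos : ∀ k, 0 < η k)
    (hdiv : Tendsto (fun n => ∑ k ∈ Finset.range n, η k) atTop atTop)
    (hη0 : Tendsto η atTop (nhds 0))
    (d : ℕ → ℝ) (S : ℝ)
    (hS : Tendsto (fun n => ∑ k ∈ Finset.range n, d k) atTop (nhds S))
    (e : ℕ → ℝ) (he : ∀ k, e (k + 1) = (1 - c * η k) * e k + d k) :
    Tendsto e atTop (nhds 0) := by
  set t : ℕ → ℝ := fun n => S - ∑ k ∈ Finset.range n, d k with htdef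
  have ht : Tendsto t atTop (nhds 0) := by
    have := tendsto_const_nhds (x := S) (f := atTop (α := ℕ)) |>.sub hS
    simpa using this
  have hw : ∀ k, (fun n => e n + t n) (k + 1)
      = (1 - c * η k) * ((fun n => e n + t n) k) + c * η k * t k := by
    intro k
    simp only [htdef, Finset.sum_range_succ]
    rw [he k]
    ring
  have hw0 := sa_det_w c hc η hηpos hdiv hη0 t ht (fun n => e n + t n) hw
  have := hw0.sub ht
  simpa using this

lemma sa_gronwall (η : ℕ → ℝ) (hsum : Summable fun k => η k ^ 2) (A : ℝ) (hA : 0 ≤ A)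
    (m : ℕ → ℝ) (hm0 : ∀ k, 0 ≤ m k)
    (hrec : ∀ k, m (k + 1) ≤ (1 + 3 * η k ^ 2) * m k + 2 * η k ^ 2 * A) :
    ∀ k, m k ≤ (m 0 + A) * Real.exp (3 * ∑' j, η j ^ 2) := by
  have hkey : ∀ k, m k + A ≤ (m 0 + A) * Real.exp (3 * ∑ j ∈ Finset.range k, η j ^ 2) := by
    intro k
    induction k with
    | zero => simp
    | succ k ih =>
      have hs := sq_nonneg (η k)
      have h1 : m (k + 1) + A ≤ (1 + 3 * η k ^ 2) * (m k + A) := by nlinarith [hm0 k, hrec k]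
      have h2 : (1 + 3 * η k ^ 2) * (m k + A) ≤ (1 + 3 * η k ^ 2) *
          ((m 0 + A) * Real.exp (3 * ∑ j ∈ Finset.range k, η j ^ 2)) := by
        apply mul_le_mul_of_nonneg_left ih (by nlinarith)
      have h3 : (1 + 3 * η k ^ 2) ≤ Real.exp (3 * η k ^ 2) := by
        linarith [Real.add_one_le_exp (3 * η k ^ 2)]
      have hm0A : (0:ℝ) ≤ m 0 + A := by linarith [hm0 0]
      have h4 : (0:ℝ) ≤ (m 0 + A) * Real.exp (3 * ∑ j ∈ Finset.range k, η j ^ 2) :=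
        mul_nonneg hm0A (Real.exp_pos _).le
      calc m (k + 1) + A ≤ (1 + 3 * η k ^ 2) * (m k + A) := h1
        _ ≤ (1 + 3 * η k ^ 2) * ((m 0 + A) * Real.exp (3 * ∑ j ∈ Finset.range k, η j ^ 2)) := h2
        _ ≤ Real.exp (3 * η k ^ 2) * ((m 0 + A) * Real.exp (3 * ∑ j ∈ Finset.range k, η j ^ 2)) :=
            mul_le_mul_of_nonneg_right h3 h4
        _ = (m 0 + A) * Real.exp (3 * ∑ j ∈ Finset.range (k + 1), η j ^ 2) := by
            rw [Finset.sum_range_succ, mul_add, Real.exp_add]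
            ring
  intro k
  have hm0A : (0:ℝ) ≤ m 0 + A := by linarith [hm0 0]
  have h5 : (∑ j ∈ Finset.range k, η j ^ 2) ≤ ∑' j, η j ^ 2 :=
    Summable.sum_le_tsum (Finset.range k) (fun i _ => sq_nonneg _) hsum
  have h6 : Real.exp (3 * ∑ j ∈ Finset.range k, η j ^ 2) ≤ Real.exp (3 * ∑' j, η j ^ 2) :=
    Real.exp_le_exp.2 (by linarith)
  calc m k ≤ m k + A := by linarith
    _ ≤ (m 0 + A) * Real.exp (3 * ∑ j ∈ Finset.range k, η j ^ 2) := hkey k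
    _ ≤ (m 0 + A) * Real.exp (3 * ∑' j, η j ^ 2) := mul_le_mul_of_nonneg_left h6 hm0A


lemma sa_abs_sub (a b : ℝ) : |a - b| ≤ |a| + |b| := by
  calc |a - b| = |a + -b| := by rw [sub_eq_add_neg]
    _ ≤ |a| + |-b| := abs_add_le _ _
    _ = |a| + |b| := by rw [abs_neg]

lemma sa_bnd_mul {a b A B : ℝ} (ha : |a| ≤ A) (hb : |b| ≤ B) : |a * b| ≤ A * B := by
  rw [abs_mul]
  exact mul_le_mul ha hb (abs_nonneg _) ((abs_nonneg a).trans ha)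

lemma sa_bnd_sq {a A : ℝ} (h : |a| ≤ A) : |a ^ 2| ≤ A ^ 2 := by
  rw [abs_pow]
  exact pow_le_pow_left₀ (abs_nonneg a) h 2

lemma sa_integral_add_sq {Ω : Type*} [MeasurableSpace Ω] (P : Measure Ω)
    (u v : Ω → ℝ)
    (huv : Integrable (fun ω => u ω * v ω) P)
    (hu2 : Integrable (fun ω => u ω ^ 2) P) (hv2 : Integrable (fun ω => v ω ^ 2) P) :
    ∫ ω, (u ω + v ω) ^ 2 ∂P
      = ∫ ω, u ω ^ 2 ∂P + 2 * ∫ ω, u ω * v ω ∂P + ∫ ω, v ω ^ 2 ∂P := by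
  have h : ∀ ω, (u ω + v ω) ^ 2 = u ω ^ 2 + (2 * (u ω * v ω) + v ω ^ 2) := fun ω => by ring
  have h1 : Integrable (fun ω => 2 * (u ω * v ω)) P := huv.const_mul 2
  have h2 : Integrable (fun ω => 2 * (u ω * v ω) + v ω ^ 2) P := h1.add hv2
  rw [integral_congr_ae (Eventually.of_forall h), integral_add hu2 h2, integral_add h1 hv2,
    integral_const_mul]
  ring


/-- **SA estimator: almost sure convergence.**
`I k` stands for the indicator `I_{k+1}` of the paper (so the IID family is indexed by `ℕ`),
and the SA recursion reads `y_{k+1} = y_k + η_k [I_{k+1}(y_k + p) − y_k]`. -/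
theorem sa_estimator_as_convergence
    {Ω : Type*} [MeasurableSpace Ω] (P : Measure Ω) [IsProbabilityMeasure P]
    (Δ p : ℝ) (hΔ : 0 < Δ) (hp : 0 < p)
    (I : ℕ → Ω → ℝ)
    (hmeas : ∀ k, Measurable (I k))
    (h01 : ∀ k ω, I k ω = 0 ∨ I k ω = 1)
    (hindep : iIndepFun I P)
    (hP : ∀ k, P {ω | I k ω = 1} = ENNReal.ofReal (Δ / (Δ + p)))
    (η : ℕ → ℝ) (hη : ∀ k, 0 < η k)
    (hη1 : ¬ Summable η) (hη2 : Summable (fun k => (η k) ^ 2))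
    (y₀ : ℝ) (y : ℕ → Ω → ℝ)
    (hy0 : ∀ ω, y 0 ω = y₀)
    (hy : ∀ k ω, y (k + 1) ω = y k ω + η k * (I k ω * (y k ω + p) - y k ω)) :
    ∀ᵐ ω ∂P, Tendsto (fun k => y k ω) atTop (nhds Δ) := by
  classical
  have hs : (0:ℝ) < Δ + p := by linarith
  set μ : ℝ := Δ / (Δ + p) with hμdef
  set c : ℝ := p / (Δ + p) with hcdef
  have hμ0 : 0 < μ := by positivity
  have hμ1 : μ < 1 := by rw [hμdef, div_lt_one hs]; linarith
  have hc0 : 0 < c := by positivity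
  have hc1 : c < 1 := by rw [hcdef, div_lt_one hs]; linarith
  -- step size facts
  have hη0' : Tendsto η atTop (nhds 0) := by
    have h := (Real.continuous_sqrt.tendsto 0).comp hη2.tendsto_atTop_zero
    rw [Real.sqrt_zero] at h
    exact Filter.Tendsto.congr (fun k => Real.sqrt_sq (hη k).le) h
  have hdiv : Tendsto (fun n => ∑ k ∈ Finset.range n, η k) atTop atTop :=
    (not_summable_iff_tendsto_nat_atTop_of_nonneg (fun n => (hη n).le)).1 hη1
  -- indicator facts
  have hξbd : ∀ k ω, |I k ω - μ| ≤ 1 := by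
    intro k ω
    rcases h01 k ω with h | h <;> rw [h, abs_le] <;> constructor <;> linarith
  have hInt : ∀ (f : Ω → ℝ) (C : ℝ), Measurable f → (∀ ω, |f ω| ≤ C) → Integrable f P :=
    fun f C hf hC => ⟨hf.aestronglyMeasurable, HasFiniteIntegral.of_bounded
      (Eventually.of_forall fun ω => by rw [Real.norm_eq_abs]; exact hC ω)⟩
  have hξint : ∀ k, Integrable (fun ω => I k ω - μ) P :=
    fun k => hInt _ 1 ((hmeas k).sub_const μ) (hξbd k)
  have hEI : ∀ k, ∫ ω, I k ω ∂P = μ := by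
    intro k
    have hset : MeasurableSet {ω | I k ω = 1} := hmeas k (measurableSet_singleton 1)
    have hind : I k = Set.indicator {ω | I k ω = 1} (fun _ => (1:ℝ)) := by
      funext ω
      rcases h01 k ω with h | h
      · rw [h, Set.indicator_of_notMem]
        simp only [Set.mem_setOf_eq, h]
        norm_num
      · rw [h, Set.indicator_of_mem]
        exact h
    rw [hind, integral_indicator_const (1:ℝ) hset, measureReal_def, hP k, smul_eq_mul, mul_one,
      ENNReal.toReal_ofReal (by positivity)]
  have hEξ : ∀ k, ∫ ω, (I k ω - μ) ∂P = 0 := by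
    intro k
    rw [integral_sub (hInt _ 1 (hmeas k) (fun ω => by
      rcases h01 k ω with h | h <;> rw [h] <;> norm_num)) (integrable_const μ),
      hEI k, integral_const]
    simp
  -- y facts
  have hymeas : ∀ k, Measurable (y k) := by
    intro k
    induction k with
    | zero =>
      have : y 0 = fun _ => y₀ := funext hy0
      rw [this]; exact measurable_const
    | succ k ih =>
      have : y (k+1) = fun ω => y k ω + η k * (I k ω * (y k ω + p) - y k ω) := funext (hy k)
      rw [this]
      exact ih.add ((((hmeas k).mul (ih.add_const p)).sub ih).const_mul _)
  have hybd : ∀ k, ∃ C, 0 ≤ C ∧ ∀ ω, |y k ω| ≤ C := by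
    intro k
    induction k with
    | zero => exact ⟨|y₀|, abs_nonneg _, fun ω => by rw [hy0]⟩
    | succ k ih =>
      obtain ⟨C, hC0, hC⟩ := ih
      refine ⟨C + η k * ((C + p) + C), add_nonneg hC0 (mul_nonneg (hη k).le (by linarith)), fun ω => ?_⟩
      rw [hy k ω]
      have h1 := hC ω
      have h2 : |I k ω * (y k ω + p)| ≤ C + p := by
        rcases h01 k ω with h | h <;> rw [h]
        · simp only [zero_mul, abs_zero]; linarith
        · rw [one_mul]
          calc |y k ω + p| ≤ |y k ω| + |p| := abs_add_le _ _
            _ ≤ C + p := by rw [abs_of_pos hp]; linarith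
      have h3 : |I k ω * (y k ω + p) - y k ω| ≤ (C + p) + C := by
        calc |I k ω * (y k ω + p) - y k ω| ≤ |I k ω * (y k ω + p)| + |y k ω| := sa_abs_sub _ _
          _ ≤ (C + p) + C := by linarith
      calc |y k ω + η k * (I k ω * (y k ω + p) - y k ω)|
          ≤ |y k ω| + |η k * (I k ω * (y k ω + p) - y k ω)| := abs_add_le _ _
        _ ≤ C + η k * ((C + p) + C) := by
            rw [abs_mul, abs_of_pos (hη k)]
            have := mul_le_mul_of_nonneg_left h3 (hη k).le
            linarith
  -- representation of y as a function of the first k coordinates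
  have hrep : ∀ k, ∃ g : (Fin k → ℝ) → ℝ, Measurable g ∧
      ∀ ω, y k ω = g (fun i => I i ω) := by
    intro k
    induction k with
    | zero => exact ⟨fun _ => y₀, measurable_const, fun ω => hy0 ω⟩
    | succ k ih =>
      obtain ⟨g, hgm, hgr⟩ := ih
      have hres : Measurable fun (x : Fin (k+1) → ℝ) => g (fun i => x i.castSucc) :=
        hgm.comp (measurable_pi_lambda _ fun i => measurable_pi_apply _)
      refine ⟨fun x => g (fun i => x i.castSucc) +
        η k * (x (Fin.last k) * (g (fun i => x i.castSucc) + p) - g (fun i => x i.castSucc)),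
        ?_, ?_⟩
      · exact hres.add ((((measurable_pi_apply _).mul (hres.add_const _)).sub hres).const_mul _)
      · intro ω
        rw [hy k ω, hgr ω]
        simp [Fin.coe_castSucc, Fin.val_last]
  choose g hgm hgr using hrep
  -- the basic recursion for the error
  have hrec : ∀ k ω, y (k+1) ω - Δ
      = (1 - c * η k) * (y k ω - Δ) + (η k * (y k ω + p)) * (I k ω - μ) := by
    intro k ω
    rw [hy k ω, hμdef, hcdef]
    field_simp
    ring
  -- independence of functions of the past from the present indicator
  have hFI : ∀ (k : ℕ) (g' : (Fin k → ℝ) → ℝ), Measurable g' →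
      IndepFun (fun ω => g' (fun i => I i ω)) (fun ω => I k ω - μ) P := by
    intro k g' hg'
    have hdisj : Disjoint (Finset.range k) ({k} : Finset ℕ) := by
      simp [Finset.disjoint_singleton_right]
    have h := hindep.indepFun_finset (Finset.range k) {k} hdisj hmeas
    have hφ : Measurable fun (x : ((Finset.range k : Finset ℕ) : Type) → ℝ) =>
        g' (fun i : Fin k => x ⟨(i:ℕ), Finset.mem_range.2 i.isLt⟩) :=
      hg'.comp (measurable_pi_lambda _ fun i => measurable_pi_apply _)
    have hψ : Measurable fun (x : (({k} : Finset ℕ) : Type) → ℝ) =>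
        x ⟨k, Finset.mem_singleton_self k⟩ - μ :=
      (measurable_pi_apply _).sub measurable_const
    exact h.comp hφ hψ
  have hkey : ∀ (k : ℕ) (F : Ω → ℝ) (g' : (Fin k → ℝ) → ℝ) (C : ℝ), Measurable g' →
      (∀ ω, F ω = g' (fun i => I i ω)) → (∀ ω, |F ω| ≤ C) →
      ∫ ω, F ω * (I k ω - μ) ∂P = 0 := by
    intro k F g' C hg' hFg hFC
    have hFeq : F = fun ω => g' (fun i => I i ω) := funext hFg
    have hFmeas : Measurable F := by
      rw [hFeq]; exact hg'.comp (measurable_pi_lambda _ fun i => hmeas i)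
    have hind : IndepFun F (fun ω => I k ω - μ) P := by
      rw [hFeq]; exact hFI k g' hg'
    have h := hind.integral_fun_mul_eq_mul_integral (hInt F C hFmeas hFC).aestronglyMeasurable (hξint k).aestronglyMeasurable
    calc ∫ ω, F ω * (I k ω - μ) ∂P = integral P F * ∫ ω, (I k ω - μ) ∂P := h
      _ = 0 := by rw [hEξ k, mul_zero]
  -- second moments
  choose Cy hCy0 hCy using hybd
  have heabs : ∀ k ω, |y k ω - Δ| ≤ Cy k + |Δ| :=
    fun k ω => (sa_abs_sub _ _).trans (by linarith [hCy k ω])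
  have hypabs : ∀ k ω, |y k ω + p| ≤ Cy k + p :=
    fun k ω => (abs_add_le _ _).trans (by rw [abs_of_pos hp]; linarith [hCy k ω])
  set Z : ℕ → Ω → ℝ := fun k ω => η k * (y k ω + p) * (I k ω - μ) with hZdef
  have hZ : ∀ k ω, Z k ω = η k * (y k ω + p) * (I k ω - μ) := fun k ω => rfl
  have hZmeas : ∀ k, Measurable (Z k) :=
    fun k => (((hymeas k).add_const p).const_mul (η k)).mul ((hmeas k).sub_const μ)
  have hηyabs : ∀ k ω, |η k * (y k ω + p)| ≤ η k * (Cy k + p) := by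
    intro k ω
    rw [abs_mul, abs_of_pos (hη k)]
    exact mul_le_mul_of_nonneg_left (hypabs k ω) (hη k).le
  have hZbd : ∀ k ω, |Z k ω| ≤ η k * (Cy k + p) * 1 :=
    fun k ω => sa_bnd_mul (hηyabs k ω) (hξbd k ω)
  have hZint : ∀ k, Integrable (Z k) P := fun k => hInt _ _ (hZmeas k) (hZbd k)
  set m : ℕ → ℝ := fun k => ∫ ω, (y k ω - Δ) ^ 2 ∂P with hmdef
  have hm : ∀ k, m k = ∫ ω, (y k ω - Δ) ^ 2 ∂P := fun k => rfl
  have hm0 : ∀ k, 0 ≤ m k := fun k => integral_nonneg fun ω => sq_nonneg _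
  have he2int : ∀ k, Integrable (fun ω => (y k ω - Δ) ^ 2) P :=
    fun k => hInt _ ((Cy k + |Δ|) ^ 2) (((hymeas k).sub_const Δ).pow_const 2)
      (fun ω => sa_bnd_sq (heabs k ω))
  have hZ2int : ∀ k, Integrable (fun ω => Z k ω ^ 2) P :=
    fun k => hInt _ ((η k * (Cy k + p) * 1) ^ 2) ((hZmeas k).pow_const 2)
      (fun ω => sa_bnd_sq (hZbd k ω))
  have hZsq : ∀ k, ∫ ω, Z k ω ^ 2 ∂P ≤ η k ^ 2 * (2 * m k + 2 * (Δ + p) ^ 2) := by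
    intro k
    have hpt : ∀ ω, Z k ω ^ 2 ≤ η k ^ 2 * (2 * (y k ω - Δ) ^ 2 + 2 * (Δ + p) ^ 2) := by
      intro ω
      have hξ2 : (I k ω - μ) ^ 2 ≤ 1 := by
        nlinarith [hξbd k ω, abs_nonneg (I k ω - μ), sq_abs (I k ω - μ)]
      have h2ab : (y k ω + p) ^ 2 ≤ 2 * (y k ω - Δ) ^ 2 + 2 * (Δ + p) ^ 2 := by
        nlinarith [sq_nonneg ((y k ω - Δ) - (Δ + p))]
      calc Z k ω ^ 2 = (η k * (y k ω + p)) ^ 2 * (I k ω - μ) ^ 2 := by rw [hZ]; ring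
        _ ≤ (η k * (y k ω + p)) ^ 2 * 1 := mul_le_mul_of_nonneg_left hξ2 (sq_nonneg _)
        _ = η k ^ 2 * (y k ω + p) ^ 2 := by ring
        _ ≤ η k ^ 2 * (2 * (y k ω - Δ) ^ 2 + 2 * (Δ + p) ^ 2) :=
            mul_le_mul_of_nonneg_left h2ab (sq_nonneg _)
    have hint2 : Integrable (fun ω => η k ^ 2 * (2 * (y k ω - Δ) ^ 2 + 2 * (Δ + p) ^ 2)) P :=
      (((he2int k).const_mul 2).add (integrable_const _)).const_mul _
    calc ∫ ω, Z k ω ^ 2 ∂P ≤ ∫ ω, η k ^ 2 * (2 * (y k ω - Δ) ^ 2 + 2 * (Δ + p) ^ 2) ∂P :=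
          integral_mono (hZ2int k) hint2 hpt
      _ = η k ^ 2 * (2 * m k + 2 * (Δ + p) ^ 2) := by
          rw [integral_const_mul, integral_add ((he2int k).const_mul 2) (integrable_const _),
            integral_const_mul, integral_const, probReal_univ, smul_eq_mul,
            one_mul, hm]
  have hmrec : ∀ k, m (k + 1) ≤ (1 + 3 * η k ^ 2) * m k + 2 * η k ^ 2 * (Δ + p) ^ 2 := by
    intro k
    set u : Ω → ℝ := fun ω => (1 - c * η k) * (y k ω - Δ) with hudef
    have hu : ∀ ω, u ω = (1 - c * η k) * (y k ω - Δ) := fun ω => rfl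
    have hubd : ∀ ω, |u ω| ≤ |1 - c * η k| * (Cy k + |Δ|) :=
      fun ω => sa_bnd_mul le_rfl (heabs k ω)
    have humeas : Measurable u := ((hymeas k).sub_const Δ).const_mul _
    have hu2int : Integrable (fun ω => u ω ^ 2) P :=
      hInt _ _ (humeas.pow_const 2) (fun ω => sa_bnd_sq (hubd ω))
    have huvint : Integrable (fun ω => u ω * Z k ω) P :=
      hInt _ _ (humeas.mul (hZmeas k)) (fun ω => sa_bnd_mul (hubd ω) (hZbd k ω))
    have hexp : m (k + 1) = ∫ ω, u ω ^ 2 ∂P + 2 * ∫ ω, u ω * Z k ω ∂P + ∫ ω, Z k ω ^ 2 ∂P := by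
      rw [hm]
      rw [integral_congr_ae (Eventually.of_forall (fun ω => by
        rw [hrec k ω, ← hZ k ω, ← hu ω] :
        ∀ ω, (y (k+1) ω - Δ) ^ 2 = (u ω + Z k ω) ^ 2))]
      exact sa_integral_add_sq P u (Z k) huvint hu2int (hZ2int k)
    have hcross : ∫ ω, u ω * Z k ω ∂P = 0 := by
      have hptc : ∀ ω, u ω * Z k ω
          = ((1 - c * η k) * (y k ω - Δ) * (η k * (y k ω + p))) * (I k ω - μ) := by
        intro ω; rw [hu, hZ]; ring
      rw [integral_congr_ae (Eventually.of_forall hptc)]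
      refine hkey k _ (fun x => (1 - c * η k) * (g k x - Δ) * (η k * (g k x + p)))
        (|1 - c * η k| * (Cy k + |Δ|) * (η k * (Cy k + p))) ?_ ?_ ?_
      · exact ((((hgm k).sub_const Δ).const_mul _).mul (((hgm k).add_const p).const_mul _))
      · intro ω; rw [hgr k ω]
      · intro ω
        exact sa_bnd_mul (sa_bnd_mul le_rfl (heabs k ω)) (hηyabs k ω)
    have husq : ∫ ω, u ω ^ 2 ∂P ≤ (1 + η k ^ 2) * m k := by
      have h1 : ∫ ω, u ω ^ 2 ∂P = (1 - c * η k) ^ 2 * m k := by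
        rw [hm, ← integral_const_mul]
        exact integral_congr_ae (Eventually.of_forall fun ω => by simp only [hu]; ring)
      rw [h1]
      have h2 : (1 - c * η k) ^ 2 ≤ 1 + η k ^ 2 := by
        nlinarith [mul_pos hc0 (hη k), mul_nonneg (mul_nonneg (sub_nonneg.2 hc1.le)
          (by linarith : (0:ℝ) ≤ 1 + c)) (sq_nonneg (η k))]
      exact mul_le_mul_of_nonneg_right h2 (hm0 k)
    have := hZsq k
    rw [hexp, hcross, mul_zero, add_zero]
    nlinarith [hm0 k, sq_nonneg (η k)]
  have hB : ∀ k, m k ≤ (m 0 + (Δ + p) ^ 2) * Real.exp (3 * ∑' j, η j ^ 2) :=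
    sa_gronwall η hη2 ((Δ + p) ^ 2) (by positivity) m hm0 hmrec
  -- the martingale of partial noise sums
  set N : ℕ → Ω → ℝ := fun n ω => ∑ k ∈ Finset.range (n + 1), Z k ω with hNdef
  have hN : ∀ n ω, N n ω = ∑ k ∈ Finset.range (n + 1), Z k ω := fun n ω => rfl
  have hNsucc : ∀ n ω, N (n + 1) ω = N n ω + Z (n + 1) ω := by
    intro n ω; rw [hN, hN, Finset.sum_range_succ]
  have hNmeas : ∀ n, Measurable (N n) :=
    fun n => Finset.measurable_sum _ (fun k _ => hZmeas k)
  have hNbd : ∀ n, ∃ C, ∀ ω, |N n ω| ≤ C := by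
    intro n
    induction n with
    | zero =>
      exact ⟨η 0 * (Cy 0 + p) * 1, fun ω => by
        rw [hN]; simpa [Finset.sum_range_one] using hZbd 0 ω⟩
    | succ n ih =>
      obtain ⟨C, hC⟩ := ih
      exact ⟨C + η (n + 1) * (Cy (n + 1) + p) * 1, fun ω => by
        rw [hNsucc n ω]
        exact (abs_add_le _ _).trans (by linarith [hC ω, hZbd (n + 1) ω])⟩
  choose CN hCN using hNbd
  have hNint : ∀ n, Integrable (N n) P := fun n => hInt _ _ (hNmeas n) (hCN n)
  have hN2int : ∀ n, Integrable (fun ω => N n ω ^ 2) P :=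
    fun n => hInt _ _ ((hNmeas n).pow_const 2) (fun ω => sa_bnd_sq (hCN n ω))
  -- N n is a function of the first n+1 coordinates
  have hNrep : ∀ n, ∃ G : (Fin (n + 1) → ℝ) → ℝ, Measurable G ∧
      ∀ ω, N n ω = G (fun i => I i ω) := by
    intro n
    induction n with
    | zero =>
      refine ⟨fun x => η 0 * (y₀ + p) * (x 0 - μ), ?_, ?_⟩
      · show Measurable fun x : Fin (0 + 1) → ℝ => η 0 * (y₀ + p) * (x 0 - μ)
        exact (((measurable_pi_apply (0 : Fin (0 + 1)) :
          Measurable fun x : Fin (0 + 1) → ℝ => x 0)).sub_const μ).const_mul (η 0 * (y₀ + p))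
      · intro ω
        rw [hN]
        simp [Finset.sum_range_one, hZ, hy0 ω]
    | succ n ih =>
      obtain ⟨G, hGm, hGr⟩ := ih
      have hres : Measurable fun (x : Fin (n + 2) → ℝ) (i : Fin (n + 1)) => x i.castSucc :=
        measurable_pi_lambda _ fun i => measurable_pi_apply _
      refine ⟨fun x => G (fun i => x i.castSucc) +
          η (n + 1) * (g (n + 1) (fun i => x i.castSucc) + p) * (x (Fin.last (n + 1)) - μ),
        ?_, ?_⟩
      · exact (hGm.comp hres).add
          (((((hgm (n + 1)).comp hres).add_const p).const_mul _).mul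
            ((measurable_pi_apply _).sub measurable_const))
      · intro ω
        rw [hNsucc n ω, hGr ω, hZ, hgr (n + 1) ω]
        simp [Fin.coe_castSucc, Fin.val_last]
  choose G hGm hGr using hNrep
  -- second moment bound for N
  set B := (m 0 + (Δ + p) ^ 2) * Real.exp (3 * ∑' j, η j ^ 2) with hBdef
  have hB0 : 0 ≤ B := le_trans (hm0 0) (hB 0)
  have hZB : ∀ k, ∫ ω, Z k ω ^ 2 ∂P ≤ (2 * B + 2 * (Δ + p) ^ 2) * η k ^ 2 := by
    intro k
    refine (hZsq k).trans ?_
    nlinarith [sq_nonneg (η k), hm0 k, hB k]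
  have hNsq : ∀ n, ∫ ω, N n ω ^ 2 ∂P
      ≤ (2 * B + 2 * (Δ + p) ^ 2) * ∑ k ∈ Finset.range (n + 1), η k ^ 2 := by
    intro n
    induction n with
    | zero =>
      have h0 : ∀ ω, N 0 ω ^ 2 = Z 0 ω ^ 2 := fun ω => by
        rw [hN]; simp [Finset.sum_range_one]
      rw [integral_congr_ae (Eventually.of_forall h0)]
      simpa [Finset.sum_range_one] using hZB 0
    | succ n ih =>
      have hexp2 : ∫ ω, N (n + 1) ω ^ 2 ∂P = ∫ ω, N n ω ^ 2 ∂P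
          + 2 * ∫ ω, N n ω * Z (n + 1) ω ∂P + ∫ ω, Z (n + 1) ω ^ 2 ∂P := by
        rw [integral_congr_ae (Eventually.of_forall (fun ω => by
          rw [hNsucc n ω] :
          ∀ ω, N (n + 1) ω ^ 2 = (N n ω + Z (n + 1) ω) ^ 2))]
        exact sa_integral_add_sq P (N n) (Z (n + 1))
          (hInt _ _ ((hNmeas n).mul (hZmeas (n + 1)))
            (fun ω => sa_bnd_mul (hCN n ω) (hZbd (n + 1) ω)))
          (hN2int n) (hZ2int (n + 1))
      have hcross2 : ∫ ω, N n ω * Z (n + 1) ω ∂P = 0 := by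
        have hptc : ∀ ω, N n ω * Z (n + 1) ω
            = (N n ω * (η (n + 1) * (y (n + 1) ω + p))) * (I (n + 1) ω - μ) := by
          intro ω; rw [hZ]; ring
        rw [integral_congr_ae (Eventually.of_forall hptc)]
        refine hkey (n + 1) _
          (fun x => G n x * (η (n + 1) * (g (n + 1) x + p)))
          (CN n * (η (n + 1) * (Cy (n + 1) + p))) ?_ ?_ ?_
        · exact (hGm n).mul (((hgm (n + 1)).add_const p).const_mul _)
        · intro ω; rw [hGr n ω, hgr (n + 1) ω]
        · intro ω; exact sa_bnd_mul (hCN n ω) (hηyabs (n + 1) ω)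
      rw [hexp2, hcross2, mul_zero, add_zero, Finset.sum_range_succ _ (n + 1)]
      have hdistr : (2 * B + 2 * (Δ + p) ^ 2)
          * (∑ k ∈ Finset.range (n + 1), η k ^ 2 + η (n + 1) ^ 2)
          = (2 * B + 2 * (Δ + p) ^ 2) * ∑ k ∈ Finset.range (n + 1), η k ^ 2
            + (2 * B + 2 * (Δ + p) ^ 2) * η (n + 1) ^ 2 := by ring
      linarith [hZB (n + 1)]
  set B2 := (2 * B + 2 * (Δ + p) ^ 2) * ∑' j, η j ^ 2 with hB2def
  have hNsq' : ∀ n, ∫ ω, N n ω ^ 2 ∂P ≤ B2 := by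
    intro n
    refine (hNsq n).trans ?_
    have hc' : (0:ℝ) ≤ 2 * B + 2 * (Δ + p) ^ 2 := by nlinarith [sq_nonneg (Δ + p)]
    exact mul_le_mul_of_nonneg_left
      (Summable.sum_le_tsum _ (fun i _ => sq_nonneg _) hη2) hc'
  have hNL1 : ∀ n, ∫ ω, |N n ω| ∂P ≤ (1 + B2) / 2 := by
    intro n
    have hpt : ∀ ω, |N n ω| ≤ (1 + N n ω ^ 2) / 2 := by
      intro ω
      nlinarith [sq_abs (N n ω), sq_nonneg (|N n ω| - 1)]
    have hint2 : Integrable (fun ω => (1 + N n ω ^ 2) / 2) P :=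
      ((integrable_const 1).add (hN2int n)).div_const 2
    calc ∫ ω, |N n ω| ∂P ≤ ∫ ω, (1 + N n ω ^ 2) / 2 ∂P :=
          integral_mono (hNint n).abs hint2 hpt
      _ = (1 + ∫ ω, N n ω ^ 2 ∂P) / 2 := by
          rw [integral_div, integral_add (integrable_const 1) (hN2int n), integral_const,
            probReal_univ, smul_eq_mul, mul_one]
      _ ≤ (1 + B2) / 2 := by linarith [hNsq' n]
  -- the natural filtration
  obtain ⟨ℱ, hℱ⟩ : ∃ ℱ : Filtration ℕ (inferInstance : MeasurableSpace Ω),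
      ∀ n, ℱ n = MeasurableSpace.comap (fun ω (i : Fin (n + 1)) => I i ω)
        MeasurableSpace.pi := by
    refine ⟨⟨fun n => MeasurableSpace.comap (fun ω (i : Fin (n + 1)) => I i ω)
      MeasurableSpace.pi, ?_, ?_⟩, fun n => rfl⟩
    · intro a b hab
      show MeasurableSpace.comap (fun ω (i : Fin (a + 1)) => I i ω) MeasurableSpace.pi
        ≤ MeasurableSpace.comap (fun ω (i : Fin (b + 1)) => I i ω) MeasurableSpace.pi
      have hcomp : (fun ω (i : Fin (a + 1)) => I (i : ℕ) ω)
          = (fun (x : Fin (b + 1) → ℝ) (i : Fin (a + 1)) => x (Fin.castLE (by omega) i))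
            ∘ (fun ω (i : Fin (b + 1)) => I (i : ℕ) ω) := rfl
      rw [hcomp, ← MeasurableSpace.comap_comp]
      exact MeasurableSpace.comap_mono
        (measurable_pi_lambda _ fun i => measurable_pi_apply _).comap_le
    · intro n
      show MeasurableSpace.comap (fun ω (i : Fin (n + 1)) => I i ω) MeasurableSpace.pi ≤ _
      exact (measurable_pi_lambda (fun ω (i : Fin (n + 1)) => I i ω) fun i => hmeas i).comap_le
  have hVm : ∀ n, Measurable[ℱ n] (fun ω (i : Fin (n + 1)) => I (i : ℕ) ω) := by
    intro n
    rw [hℱ n]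
    exact measurable_iff_comap_le.2 le_rfl
  have hadp : ∀ n, StronglyMeasurable[ℱ n] (N n) := by
    intro n
    have h : N n = fun ω => G n (fun i => I i ω) := funext (hGr n)
    rw [h]
    exact ((hGm n).comp (hVm n)).stronglyMeasurable
  have hyadp : ∀ n, StronglyMeasurable[ℱ n] (fun ω => η (n + 1) * (y (n + 1) ω + p)) := by
    intro n
    have h : (fun ω => η (n + 1) * (y (n + 1) ω + p))
        = fun ω => η (n + 1) * (g (n + 1) (fun i => I i ω) + p) := by
      funext ω; rw [hgr (n + 1) ω]
    rw [h]
    exact ((((hgm (n + 1)).comp (hVm n)).add_const p).const_mul _).stronglyMeasurable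
  have hIndepF : ∀ n, Indep (MeasurableSpace.comap (I (n + 1)) inferInstance) (ℱ n) P := by
    intro n
    rw [hℱ n]
    have hdisj : Disjoint ({n + 1} : Finset ℕ) (Finset.range (n + 1)) := by
      simp [Finset.disjoint_left]
    have h := hindep.indepFun_finset {n + 1} (Finset.range (n + 1)) hdisj hmeas
    have hφ : Measurable fun (x : (({n + 1} : Finset ℕ) : Type) → ℝ) =>
        x ⟨n + 1, Finset.mem_singleton_self _⟩ := measurable_pi_apply _
    have hψ : Measurable fun (x : ((Finset.range (n + 1) : Finset ℕ) : Type) → ℝ)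
        (i : Fin (n + 1)) => x ⟨(i : ℕ), Finset.mem_range.2 i.isLt⟩ :=
      measurable_pi_lambda _ fun i => measurable_pi_apply _
    have h2 := h.comp hφ hψ
    exact (IndepFun_iff_Indep _ _ _).1 h2
  have hcondxi : ∀ n, P[(fun ω => I (n + 1) ω - μ) | ℱ n] =ᵐ[P] fun _ => 0 := by
    intro n
    have hsm : StronglyMeasurable[MeasurableSpace.comap (I (n + 1)) inferInstance]
        (fun ω => I (n + 1) ω - μ) :=
      ((measurable_iff_comap_le.2 le_rfl).sub_const μ).stronglyMeasurable
    have h := condExp_indep_eq (hmeas (n + 1)).comap_le (ℱ.le n) hsm (hIndepF n)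
    refine h.trans (EventuallyEq.of_eq ?_)
    funext _
    exact hEξ (n + 1)
  have hmart : Martingale N ℱ P := by
    refine martingale_nat hadp hNint fun i => ?_
    have hNeq : N (i + 1) = N i + (fun ω => η (i + 1) * (y (i + 1) ω + p))
        * (fun ω => I (i + 1) ω - μ) := by
      funext ω
      rw [hNsucc i ω, hZ]
      simp only [Pi.add_apply, Pi.mul_apply]
    rw [hNeq]
    have hfg : Integrable ((fun ω => η (i + 1) * (y (i + 1) ω + p))
        * (fun ω => I (i + 1) ω - μ)) P := hZint (i + 1)
    refine EventuallyEq.symm ((condExp_add (hNint i) hfg _).trans ?_)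
    rw [condExp_of_stronglyMeasurable (ℱ.le i) (hadp i) (hNint i)]
    have h3 := condExp_mul_of_stronglyMeasurable_left (hyadp i) hfg (hξint (i + 1))
    filter_upwards [h3, hcondxi i] with ω h3ω hcω
    simp only [Pi.add_apply, Pi.mul_apply] at *
    rw [h3ω, hcω, mul_zero, add_zero]
  have hbdd : ∀ n, eLpNorm (N n) 1 P ≤ ENNReal.ofReal ((1 + B2) / 2) := by
    intro n
    rw [eLpNorm_one_eq_lintegral_enorm, ← ofReal_integral_norm_eq_lintegral_enorm (hNint n)]
    apply ENNReal.ofReal_le_ofReal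
    simpa [Real.norm_eq_abs] using hNL1 n
  have hconv := hmart.submartingale.exists_ae_tendsto_of_bdd
    (R := ((1 + B2) / 2).toNNReal) (fun n => hbdd n)
  filter_upwards [hconv] with ω hω
  obtain ⟨L, hL⟩ := hω
  have hL' : Tendsto (fun n => ∑ k ∈ Finset.range (n + 1), Z k ω) atTop (nhds L) := by
    have h : (fun n => N n ω) = fun n => ∑ k ∈ Finset.range (n + 1), Z k ω :=
      funext fun n => hN n ω
    rw [h] at hL
    exact hL
  have hsum' : Tendsto (fun n => ∑ k ∈ Finset.range n, Z k ω) atTop (nhds L) :=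
    (tendsto_add_atTop_iff_nat 1).1 hL'
  have hdet := sa_det c hc0 η hη hdiv hη0' (fun k => Z k ω) L hsum'
    (fun k => y k ω - Δ) (fun k => by show y (k + 1) ω - Δ = _; rw [hrec k ω, ← hZ k ω])
  have hfin := hdet.add_const Δ
  simpa using hfin
end

section
/- Let Δ > 0 and p > 0. Let (I_k)_{k≥1} be an IID sequence of {0,1}-valued random variables with P(I_1 = 1) = Δ/(Δ+p). Fix η ∈ (0,1), set η_k = (k+1)^{−η}, fix y_0 ∈ ℝ, and define y_{k+1} = y_k + η_k·[I_{k+1}(y_k + p) − y_k] for k ≥ 0. Then E|y_k − Δ| = O(k^{−η/2}); i.e., there exists C > 0 such that E|y_k − Δ| ≤ C·k^{−η/2} for all k ≥ 1. -/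
open MeasureTheory ProbabilityTheory Filter


lemma sa_abs_le_sqrt {Ω : Type*} [MeasurableSpace Ω] (P : Measure Ω) [IsProbabilityMeasure P]
    (f : Ω → ℝ) (hf : Integrable f P) (hf2 : Integrable (fun ω => f ω ^ 2) P) :
    ∫ ω, |f ω| ∂P ≤ Real.sqrt (∫ ω, f ω ^ 2 ∂P) := by
  set m := ∫ ω, f ω ^ 2 ∂P with hm
  have hm0 : 0 ≤ m := integral_nonneg fun ω => sq_nonneg _
  have key : ∀ t : ℝ, 0 < t → ∫ ω, |f ω| ∂P ≤ (t + m / t) / 2 := by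
    intro t ht
    have hpt : ∀ ω, |f ω| ≤ (t + f ω ^ 2 / t) / 2 := by
      intro ω
      have h2 : f ω ^ 2 = |f ω| ^ 2 := (sq_abs _).symm
      rw [le_div_iff₀ (by norm_num : (0:ℝ) < 2), add_comm, div_add' _ _ _ (ne_of_gt ht),
        le_div_iff₀ ht]
      nlinarith [sq_nonneg (|f ω| - t), abs_nonneg (f ω)]
    calc ∫ ω, |f ω| ∂P ≤ ∫ ω, (t + f ω ^ 2 / t) / 2 ∂P := by
          apply integral_mono hf.abs _ hpt
          exact (((integrable_const t).add (hf2.div_const t)).div_const 2)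
      _ = (t + m / t) / 2 := by
          rw [integral_div, integral_add (integrable_const t) (hf2.div_const t),
            integral_const, integral_div]
          simp
          rw [hm]
  rcases eq_or_lt_of_le hm0 with h0 | hpos
  · have : ∫ ω, |f ω| ∂P ≤ 0 := by
      apply le_of_forall_pos_le_add
      intro ε hε
      have := key (2 * ε) (by linarith)
      rw [← h0] at this
      simp only [zero_div, add_zero] at this
      linarith
    simpa [← h0] using this
  · have := key (Real.sqrt m) (Real.sqrt_pos.2 hpos)
    rwa [Real.div_sqrt, add_self_div_two] at this


set_option maxHeartbeats 1000000 in
lemma sa_rate_rec (a η D : ℝ) (ha0 : 0 < a) (ha1 : a ≤ 1) (hη0 : 0 < η) (hη1 : η < 1)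
    (hD : 0 ≤ D) (m : ℕ → ℝ) (hm : ∀ k, 0 ≤ m k)
    (hrec : ∀ k : ℕ, m (k + 1) ≤
      (1 - 2 * a * ((k : ℝ) + 1) ^ (-η) + 3 * (((k : ℝ) + 1) ^ (-η)) ^ 2) * m k
        + D * (((k : ℝ) + 1) ^ (-η)) ^ 2) :
    ∃ C > 0, ∀ k : ℕ, 1 ≤ k → m k ≤ C * (k : ℝ) ^ (-η) := by
  have hε : ∀ k : ℕ, 0 < ((k : ℝ) + 1) ^ (-η) := fun k =>
    Real.rpow_pos_of_pos (by positivity) _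
  have hε1 : ∀ k : ℕ, ((k : ℝ) + 1) ^ (-η) ≤ 1 := fun k =>
    Real.rpow_le_one_of_one_le_of_nonpos (by linarith [Nat.cast_nonneg (α := ℝ) k])
      (by linarith)
  -- find K
  have h1 : Tendsto (fun k : ℕ => ((k : ℝ) + 1) ^ (-η)) atTop (nhds 0) :=
    (tendsto_rpow_neg_atTop hη0).comp
      (tendsto_atTop_add_const_right _ 1 tendsto_natCast_atTop_atTop)
  have h2 : Tendsto (fun k : ℕ => (k : ℝ) ^ (η - 1)) atTop (nhds 0) := by
    have h := (tendsto_rpow_neg_atTop (y := 1 - η) (by linarith)).comp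
      (tendsto_natCast_atTop_atTop (R := ℝ))
    simpa [Function.comp_def, neg_sub] using h
  have hev : ∀ᶠ k : ℕ in atTop,
      3 * ((k : ℝ) + 1) ^ (-η) ≤ a ∧ η * (k : ℝ) ^ (η - 1) ≤ a / 2 ∧ 1 ≤ k := by
    filter_upwards [h1.eventually_lt_const (show (0:ℝ) < a / 3 by linarith),
      h2.eventually_lt_const (show (0:ℝ) < a / (2 * η) by positivity),
      eventually_ge_atTop 1] with k hk1 hk2 hk3
    refine ⟨by linarith, ?_, hk3⟩
    have h3 : η * ((k : ℝ) ^ (η - 1)) ≤ η * (a / (2 * η)) :=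
      mul_le_mul_of_nonneg_left hk2.le hη0.le
    have h4 : η * (a / (2 * η)) = a / 2 := by field_simp
    linarith
  obtain ⟨K, hK⟩ := eventually_atTop.mp hev
  have hK1 : 1 ≤ K := (hK K le_rfl).2.2
  set C₀ : ℝ := max (2 * D / a) (m K * (K : ℝ) ^ η) with hC₀
  clear_value C₀
  have hC₀0 : 0 ≤ C₀ := by rw [hC₀]; exact le_trans (by positivity) (le_max_left _ _)
  -- key identity u = (1+1/k)^η * v
  have hid : ∀ k : ℕ, 1 ≤ k →
      (k : ℝ) ^ (-η) = (1 + 1 / (k : ℝ)) ^ η * ((k : ℝ) + 1) ^ (-η) := by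
    intro k hk
    have hk0 : (0:ℝ) < k := by exact_mod_cast hk
    have e1 : (1 : ℝ) + 1 / (k : ℝ) = ((k : ℝ) + 1) / k := by field_simp
    have h1' : ((k : ℝ) + 1) ^ η * ((k : ℝ) + 1) ^ (-η) = 1 := by
      rw [← Real.rpow_add (by positivity)]; simp
    rw [e1, Real.div_rpow (by positivity) hk0.le, Real.rpow_neg hk0.le,
      div_mul_eq_mul_div, h1', one_div]
  -- induction step
  have step : ∀ k : ℕ, K ≤ k → m k ≤ C₀ * (k : ℝ) ^ (-η) →
      m (k + 1) ≤ C₀ * ((k : ℝ) + 1) ^ (-η) := by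
    intro k hkK hmk
    have hk1 : 1 ≤ k := le_trans hK1 hkK
    have hk0 : (0:ℝ) < (k : ℝ) := by exact_mod_cast hk1
    obtain ⟨hKa, hKb, -⟩ := hK k hkK
    set u : ℝ := (k : ℝ) ^ (-η) with hu
    set v : ℝ := ((k : ℝ) + 1) ^ (-η) with hv
    have hu0'' : 0 < u := Real.rpow_pos_of_pos hk0 _
    clear hu0''
    clear_value u v
    have hu0 : 0 < u := hu ▸ Real.rpow_pos_of_pos hk0 _
    have hv0 : 0 < v := hv ▸ hε k
    have hv1 : v ≤ 1 := hv ▸ hε1 k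
    have hBern : (1 + 1 / (k : ℝ)) ^ η ≤ 1 + η * (1 / (k : ℝ)) :=
      rpow_one_add_le_one_add_mul_self
        (le_trans (by norm_num : (-1:ℝ) ≤ 0) (by positivity)) hη0.le hη1.le
    have hone : (1:ℝ) ≤ (1 + 1 / (k : ℝ)) ^ η :=
      Real.one_le_rpow (le_add_of_nonneg_right (by positivity)) hη0.le
    have hidk : u = (1 + 1 / (k : ℝ)) ^ η * v := by rw [hu, hv]; exact hid k hk1
    have hA : u ≤ v + v * (η * (1 / (k : ℝ))) := by
      rw [hidk]; nlinarith
    have hvu : v ≤ u := by rw [hidk]; nlinarith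
    -- η/k ≤ (a/2) u
    have hB : η * (1 / (k : ℝ)) ≤ a / 2 * u := by
      have hsplit : (k : ℝ) ^ (η - 1) * u = 1 / (k : ℝ) := by
        rw [hu, ← Real.rpow_add hk0, show η - 1 + -η = (-1:ℝ) by ring,
          Real.rpow_neg_one, one_div]
      have h5 : η * ((k : ℝ) ^ (η - 1) * u) ≤ (a / 2) * u := by
        rw [← mul_assoc]
        exact mul_le_mul_of_nonneg_right hKb hu0.le
      rwa [hsplit] at h5
    have hC : D * v ≤ a / 2 * C₀ * u := by
      have hDC : 2 * D / a ≤ C₀ := by rw [hC₀]; exact le_max_left _ _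
      have hD' : D ≤ a / 2 * C₀ := by
        have h6 := mul_le_mul_of_nonneg_left hDC (by positivity : (0:ℝ) ≤ a / 2)
        have h7 : a / 2 * (2 * D / a) = D := by field_simp
        linarith
      calc D * v ≤ (a / 2 * C₀) * u :=
            mul_le_mul hD' hvu hv0.le (by positivity)
        _ = a / 2 * C₀ * u := rfl
    have h0 : m (k + 1) ≤ (1 - 2 * a * v + 3 * v ^ 2) * m k + D * v ^ 2 := by
      rw [hv]; exact hrec k
    have hcoef : 1 - 2 * a * v + 3 * v ^ 2 ≤ 1 - a * v := by
      nlinarith [mul_nonneg (by linarith : (0:ℝ) ≤ a - 3 * v) hv0.le]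
    have hrec' : m (k + 1) ≤ (1 - a * v) * m k + D * v ^ 2 := by
      nlinarith [mul_le_mul_of_nonneg_right hcoef (hm k)]
    have hav : a * v ≤ 1 := by nlinarith
    -- combine
    have e1 : C₀ * u ≤ C₀ * v + a / 2 * (C₀ * (u * v)) := by
      have h8 : v * (η * (1 / (k : ℝ))) ≤ v * (a / 2 * u) :=
        mul_le_mul_of_nonneg_left hB hv0.le
      have h9 : u ≤ v + v * (a / 2 * u) := by linarith
      have h10 := mul_le_mul_of_nonneg_left h9 hC₀0
      nlinarith
    have e2 : D * v ^ 2 ≤ a / 2 * (C₀ * (u * v)) := by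
      have := mul_le_mul_of_nonneg_right hC hv0.le
      nlinarith
    have e3 : (1 - a * v) * m k ≤ (1 - a * v) * (C₀ * u) :=
      mul_le_mul_of_nonneg_left hmk (by linarith)
    nlinarith [e1, e2, e3, hrec']
  -- full induction
  have hind : ∀ k : ℕ, K ≤ k → m k ≤ C₀ * (k : ℝ) ^ (-η) := by
    intro k hk
    induction k, hk using Nat.le_induction with
    | base =>
      have hKpos : (0:ℝ) < (K : ℝ) := by exact_mod_cast hK1
      have h1' : (K : ℝ) ^ η * (K : ℝ) ^ (-η) = 1 := by
        rw [← Real.rpow_add hKpos]; simp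
      have h2' : m K = (m K * (K : ℝ) ^ η) * (K : ℝ) ^ (-η) := by
        rw [mul_assoc, h1', mul_one]
      rw [h2']
      exact mul_le_mul_of_nonneg_right (by rw [hC₀]; exact le_max_right _ _)
        (Real.rpow_pos_of_pos hKpos _).le
    | succ k hk ih =>
      have := step k hk ih
      have hcast : ((k + 1 : ℕ) : ℝ) = (k : ℝ) + 1 := by push_cast; ring
      rw [hcast]
      exact this
  -- final constant
  refine ⟨C₀ + (∑ j ∈ Finset.range (K + 1), m j * (j : ℝ) ^ η) + 1, ?_, ?_⟩
  · have : 0 ≤ ∑ j ∈ Finset.range (K + 1), m j * (j : ℝ) ^ η :=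
      Finset.sum_nonneg fun j _ => mul_nonneg (hm j) (Real.rpow_nonneg (Nat.cast_nonneg j) _)
    linarith
  · intro k hk
    have hk0 : (0:ℝ) < (k : ℝ) := by exact_mod_cast hk
    have hu0 : (0:ℝ) < (k : ℝ) ^ (-η) := Real.rpow_pos_of_pos hk0 _
    have hsum0 : 0 ≤ ∑ j ∈ Finset.range (K + 1), m j * (j : ℝ) ^ η :=
      Finset.sum_nonneg fun j _ => mul_nonneg (hm j) (Real.rpow_nonneg (Nat.cast_nonneg j) _)
    rcases le_or_gt K k with h | h
    · calc m k ≤ C₀ * (k : ℝ) ^ (-η) := hind k h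
        _ ≤ (C₀ + (∑ j ∈ Finset.range (K + 1), m j * (j : ℝ) ^ η) + 1) * (k : ℝ) ^ (-η) := by
            apply mul_le_mul_of_nonneg_right _ hu0.le
            linarith
    · have hmem : k ∈ Finset.range (K + 1) := Finset.mem_range.2 (by omega)
      have hsingle : m k * (k : ℝ) ^ η ≤ ∑ j ∈ Finset.range (K + 1), m j * (j : ℝ) ^ η :=
        Finset.single_le_sum
          (fun j _ => mul_nonneg (hm j) (Real.rpow_nonneg (Nat.cast_nonneg j) _)) hmem
      have h1' : (k : ℝ) ^ η * (k : ℝ) ^ (-η) = 1 := by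
        rw [← Real.rpow_add hk0]; simp
      have h2' : m k = (m k * (k : ℝ) ^ η) * (k : ℝ) ^ (-η) := by
        rw [mul_assoc, h1', mul_one]
      rw [h2']
      apply mul_le_mul_of_nonneg_right _ hu0.le
      linarith

set_option maxHeartbeats 2000000 in
/-- **SA estimator: convergence rate in expected error.**
`I k` stands for the indicator `I_{k+1}` of the paper, the stepsizes are
`η_k = (k+1)^{−η}` with `η ∈ (0,1)`, and the conclusion is
`E|y_k − Δ| ≤ C·k^{−η/2}` for all `k ≥ 1`. -/
theorem sa_estimator_rate
    {Ω : Type*} [MeasurableSpace Ω] (P : Measure Ω) [IsProbabilityMeasure P]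
    (Δ p : ℝ) (hΔ : 0 < Δ) (hp : 0 < p)
    (I : ℕ → Ω → ℝ)
    (hmeas : ∀ k, Measurable (I k))
    (h01 : ∀ k ω, I k ω = 0 ∨ I k ω = 1)
    (hindep : iIndepFun I P)
    (hP : ∀ k, P {ω | I k ω = 1} = ENNReal.ofReal (Δ / (Δ + p)))
    (η : ℝ) (hη0 : 0 < η) (hη1 : η < 1)
    (y₀ : ℝ) (y : ℕ → Ω → ℝ)
    (hy0 : ∀ ω, y 0 ω = y₀)
    (hy : ∀ k ω, y (k + 1) ω
        = y k ω + ((k : ℝ) + 1) ^ (-η) * (I k ω * (y k ω + p) - y k ω)) :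
    ∃ C > 0, ∀ k : ℕ, 1 ≤ k → ∫ ω, |y k ω - Δ| ∂P ≤ C * (k : ℝ) ^ (-η / 2) := by
  have hΔp : (0:ℝ) < Δ + p := by linarith
  set μv : ℝ := Δ / (Δ + p) with hμv
  set a : ℝ := p / (Δ + p) with ha
  have hμ0 : 0 < μv := by positivity
  have hμ1 : μv < 1 := by rw [hμv, div_lt_one hΔp]; linarith
  have ha0 : 0 < a := by positivity
  have ha1 : a < 1 := by rw [ha, div_lt_one hΔp]; linarith
  -- step sizes
  have hε0 : ∀ k : ℕ, 0 < ((k : ℝ) + 1) ^ (-η) := fun k =>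
    Real.rpow_pos_of_pos (by positivity) _
  have hε1 : ∀ k : ℕ, ((k : ℝ) + 1) ^ (-η) ≤ 1 := fun k =>
    Real.rpow_le_one_of_one_le_of_nonpos (by linarith [Nat.cast_nonneg (α := ℝ) k])
      (by linarith)
  -- measurability of y
  have hym : ∀ k, Measurable (y k) := by
    intro k
    induction k with
    | zero =>
      have : y 0 = fun _ => y₀ := funext hy0
      rw [this]; exact measurable_const
    | succ k ih =>
      have : y (k + 1) = fun ω =>
          y k ω + ((k : ℝ) + 1) ^ (-η) * (I k ω * (y k ω + p) - y k ω) := funext (hy k)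
      rw [this]
      exact ih.add (measurable_const.mul (((hmeas k).mul (ih.add measurable_const)).sub ih))
  -- uniform bound on I
  have hI1 : ∀ k ω, |I k ω| ≤ 1 := by
    intro k ω; rcases h01 k ω with h | h <;> rw [h] <;> norm_num
  -- deterministic bound on y
  have hyB : ∀ k : ℕ, ∀ ω, |y k ω| ≤ (4:ℝ) ^ k * (|y₀| + p) := by
    intro k
    induction k with
    | zero =>
      intro ω; rw [hy0]
      simp only [pow_zero, one_mul]
      linarith [abs_nonneg y₀]
    | succ k ih =>
      intro ω
      have hb := ih ω
      have hpow : (1:ℝ) ≤ (4:ℝ) ^ k := one_le_pow₀ (by norm_num)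
      have hBp : p ≤ (4:ℝ) ^ k * (|y₀| + p) := by nlinarith [abs_nonneg y₀]
      have hε := hε0 k
      have hε' := hε1 k
      rw [hy k ω]
      rcases h01 k ω with h | h <;> rw [h]
      · have : y k ω + ((k : ℝ) + 1) ^ (-η) * (0 * (y k ω + p) - y k ω)
            = y k ω - ((k : ℝ) + 1) ^ (-η) * y k ω := by ring
        rw [this, pow_succ]
        have := abs_le.1 hb
        rw [abs_le]
        constructor <;> nlinarith [abs_nonneg (y k ω)]
      · have : y k ω + ((k : ℝ) + 1) ^ (-η) * (1 * (y k ω + p) - y k ω)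
            = y k ω + ((k : ℝ) + 1) ^ (-η) * p := by ring
        rw [this, pow_succ]
        have := abs_le.1 hb
        rw [abs_le]
        constructor <;> nlinarith [abs_nonneg (y k ω)]
  -- integrability helper
  have hint : ∀ (f : Ω → ℝ) (c : ℝ), Measurable f → (∀ ω, |f ω| ≤ c) → Integrable f P := by
    intro f c hf hb
    exact (integrable_const c).mono' hf.aestronglyMeasurable
      (ae_of_all _ fun ω => by simpa [Real.norm_eq_abs] using hb ω)
  -- expectation of I k
  have hEI : ∀ k, ∫ ω, I k ω ∂P = μv := by
    intro k
    have hset : MeasurableSet {ω | I k ω = 1} := hmeas k (measurableSet_singleton 1)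
    have hieq : I k = Set.indicator {ω | I k ω = 1} (fun _ => (1:ℝ)) := by
      funext ω
      rcases h01 k ω with h | h
      · rw [h, Set.indicator_apply]
        simp only [Set.mem_setOf_eq, h]
        norm_num
      · rw [h, Set.indicator_apply]
        simp [Set.mem_setOf_eq, h]
    rw [hieq, integral_indicator_const (1:ℝ) hset, measureReal_def, hP k, smul_eq_mul, mul_one,
      ENNReal.toReal_ofReal (by positivity)]
  -- independence of y k and I k
  have hrep : ∀ k : ℕ, ∃ g : ({i // i ∈ Finset.range k} → ℝ) → ℝ,
      Measurable g ∧ ∀ ω, y k ω = g (fun i => I i.1 ω) := by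
    intro k
    induction k with
    | zero =>
      exact ⟨fun _ => y₀, measurable_const, fun ω => hy0 ω⟩
    | succ k ih =>
      obtain ⟨g, hgm, hgy⟩ := ih
      have hsub : ∀ i : ℕ, i ∈ Finset.range k → i ∈ Finset.range (k + 1) := by
        intro i hi; rw [Finset.mem_range] at *; omega
      have hklt : k ∈ Finset.range (k + 1) := Finset.mem_range.2 (by omega)
      set res : ({i // i ∈ Finset.range (k+1)} → ℝ) → ({i // i ∈ Finset.range k} → ℝ) :=
        fun v i => v ⟨i.1, hsub i.1 i.2⟩ with hres
      have hresm : Measurable res :=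
        measurable_pi_lambda _ fun i => measurable_pi_apply _
      refine ⟨fun v => g (res v) + ((k : ℝ) + 1) ^ (-η) *
        (v ⟨k, hklt⟩ * (g (res v) + p) - g (res v)), ?_, ?_⟩
      · exact (hgm.comp hresm).add (measurable_const.mul
          (((measurable_pi_apply _).mul ((hgm.comp hresm).add measurable_const)).sub
            (hgm.comp hresm)))
      · intro ω
        rw [hy k ω, hgy ω]
  have hYI : ∀ k : ℕ, IndepFun (y k) (I k) P := by
    intro k
    obtain ⟨g, hgm, hgy⟩ := hrep k
    have hdisj : Disjoint (Finset.range k) ({k} : Finset ℕ) := by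
      simp only [Finset.disjoint_left, Finset.mem_range, Finset.mem_singleton]
      omega
    have h1 := hindep.indepFun_finset (Finset.range k) {k} hdisj hmeas
    have hklt : k ∈ ({k} : Finset ℕ) := Finset.mem_singleton_self k
    have h2 := h1.comp hgm (measurable_pi_apply (⟨k, hklt⟩ : {i // i ∈ ({k} : Finset ℕ)}))
    have e1 : (g ∘ fun ω (i : {i // i ∈ Finset.range k}) => I i.1 ω) = y k := by
      funext ω; exact (hgy ω).symm
    have e2 : ((fun v : {i // i ∈ ({k} : Finset ℕ)} → ℝ => v ⟨k, hklt⟩) ∘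
        fun ω (i : {i // i ∈ ({k} : Finset ℕ)}) => I i.1 ω) = I k := rfl
    rwa [e1, e2] at h2
  -- global pointwise bounds
  have babs : ∀ (k : ℕ) ω, |y k ω - Δ| ≤ (4:ℝ) ^ k * (|y₀| + p) + |Δ| := by
    intro k ω; have h := abs_le.1 (hyB k ω); rw [abs_le]
    constructor <;> nlinarith [le_abs_self Δ, neg_abs_le Δ]
  have byp : ∀ (k : ℕ) ω, |y k ω + p| ≤ (4:ℝ) ^ k * (|y₀| + p) + p := by
    intro k ω; have h := abs_le.1 (hyB k ω); rw [abs_le]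
    constructor <;> nlinarith
  have bIμ : ∀ (k : ℕ) ω, |I k ω - μv| ≤ 2 := by
    intro k ω; rcases h01 k ω with h | h <;> rw [h, abs_le] <;>
      constructor <;> nlinarith
  -- integrability of the squared error
  have intSq : ∀ k : ℕ, Integrable (fun ω => (y k ω - Δ)^2) P := by
    intro k
    apply hint _ (((4:ℝ) ^ k * (|y₀| + p) + |Δ|)^2) (((hym k).sub measurable_const).pow_const 2)
    intro ω
    rw [abs_of_nonneg (sq_nonneg _), ← sq_abs]
    exact pow_le_pow_left₀ (abs_nonneg _) (babs k ω) 2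
  have hmk0 : ∀ k : ℕ, 0 ≤ ∫ ω, (y k ω - Δ)^2 ∂P := fun k =>
    integral_nonneg fun ω => sq_nonneg _
  -- the recursion
  have hrecI : ∀ k : ℕ, ∫ ω, (y (k+1) ω - Δ)^2 ∂P ≤
      (1 - 2 * a * ((k : ℝ) + 1) ^ (-η) + 3 * (((k : ℝ) + 1) ^ (-η)) ^ 2)
        * ∫ ω, (y k ω - Δ)^2 ∂P
      + (2 * (Δ + p)^2) * (((k : ℝ) + 1) ^ (-η)) ^ 2 := by
    intro k
    set ε : ℝ := ((k : ℝ) + 1) ^ (-η) with hεdef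
    have hεp : 0 < ε := hεdef ▸ hε0 k
    have hεle : ε ≤ 1 := hεdef ▸ hε1 k
    clear_value ε
    set Bk : ℝ := (4:ℝ) ^ k * (|y₀| + p) with hBkdef
    have hBk0 : 0 ≤ Bk := hBkdef ▸ by positivity
    clear_value Bk
    -- measurability
    have my : Measurable (y k) := hym k
    have mI : Measurable (I k) := hmeas k
    -- integrable pieces
    have int1 : Integrable (fun ω => (y k ω - Δ)^2) P := intSq k
    have intX : Integrable (fun ω => (y k ω - Δ) * (y k ω + p)) P := by
      apply hint _ ((Bk + |Δ|) * (Bk + p))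
        ((my.sub measurable_const).mul (my.add measurable_const))
      intro ω
      show |(y k ω - Δ) * (y k ω + p)| ≤ _
      rw [abs_mul]
      exact mul_le_mul (hBkdef ▸ babs k ω) (hBkdef ▸ byp k ω) (abs_nonneg _)
        (by nlinarith [abs_nonneg Δ])
    have intY : Integrable (fun ω => I k ω - μv) P := by
      apply hint _ 2 (mI.sub measurable_const)
      exact bIμ k
    have intXY : Integrable (fun ω => ((y k ω - Δ) * (y k ω + p)) * (I k ω - μv)) P := by
      apply hint _ ((Bk + |Δ|) * (Bk + p) * 2)
        (((my.sub measurable_const).mul (my.add measurable_const)).mul (mI.sub measurable_const))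
      intro ω
      show |(y k ω - Δ) * (y k ω + p) * (I k ω - μv)| ≤ _
      rw [abs_mul, abs_mul]
      have h1 : 0 ≤ (Bk + |Δ|) * (Bk + p) := by nlinarith [abs_nonneg Δ]
      exact mul_le_mul
        (mul_le_mul (hBkdef ▸ babs k ω) (hBkdef ▸ byp k ω) (abs_nonneg _)
          (by nlinarith [abs_nonneg Δ]))
        (bIμ k ω) (abs_nonneg _) h1
    have int4 : Integrable (fun ω => (y k ω + p)^2) P := by
      apply hint _ ((Bk + p)^2) ((my.add measurable_const).pow_const 2)
      intro ω
      rw [abs_of_nonneg (sq_nonneg _), ← sq_abs]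
      exact pow_le_pow_left₀ (abs_nonneg _) (hBkdef ▸ byp k ω) 2
    have int3 : Integrable (fun ω => (y k ω + p)^2 * (I k ω - μv)^2) P := by
      apply hint _ ((Bk + p)^2 * 4)
        (((my.add measurable_const).pow_const 2).mul ((mI.sub measurable_const).pow_const 2))
      intro ω
      show |(y k ω + p)^2 * (I k ω - μv)^2| ≤ _
      rw [abs_mul, abs_of_nonneg (sq_nonneg _), abs_of_nonneg (sq_nonneg _),
        ← sq_abs (y k ω + p), ← sq_abs (I k ω - μv)]
      have h2 : |I k ω - μv| ^ 2 ≤ 4 := by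
        have := bIμ k ω; nlinarith [abs_nonneg (I k ω - μv)]
      exact mul_le_mul (pow_le_pow_left₀ (abs_nonneg _) (hBkdef ▸ byp k ω) 2) h2
        (by positivity) (by positivity)
    -- pointwise decomposition
    have key : ∀ ω, y (k+1) ω - Δ
        = (1 - a * ε) * (y k ω - Δ) + ε * ((I k ω - μv) * (y k ω + p)) := by
      intro ω
      rw [hy k ω, ← hεdef, ha, hμv]
      field_simp
      ring
    have hsum : ∀ ω, (y (k+1) ω - Δ)^2
        = (1 - a * ε)^2 * (y k ω - Δ)^2
          + (2 * (1 - a * ε) * ε) * (((y k ω - Δ) * (y k ω + p)) * (I k ω - μv))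
          + ε^2 * ((y k ω + p)^2 * (I k ω - μv)^2) := by
      intro ω; rw [key ω]; ring
    -- expectation of the cross term vanishes
    have hXY : IndepFun (fun ω => (y k ω - Δ) * (y k ω + p)) (fun ω => I k ω - μv) P :=
      (hYI k).comp ((measurable_id.sub_const Δ).mul (measurable_id.add_const p))
        (measurable_id.sub_const μv)
    have hY0 : ∫ ω, (I k ω - μv) ∂P = 0 := by
      rw [integral_sub (hint _ 1 mI (hI1 k)) (integrable_const _), hEI k, integral_const]
      simp
    have hT1 : ∫ ω, ((y k ω - Δ) * (y k ω + p)) * (I k ω - μv) ∂P = 0 := by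
      calc ∫ ω, ((y k ω - Δ) * (y k ω + p)) * (I k ω - μv) ∂P
          = (∫ ω, (y k ω - Δ) * (y k ω + p) ∂P) * ∫ ω, (I k ω - μv) ∂P :=
            hXY.integral_mul_eq_mul_integral intX.aestronglyMeasurable intY.aestronglyMeasurable
        _ = 0 := by rw [hY0, mul_zero]
    -- bound on the quadratic term
    have hT2 : ∫ ω, (y k ω + p)^2 * (I k ω - μv)^2 ∂P
        ≤ 2 * (∫ ω, (y k ω - Δ)^2 ∂P) + 2 * (Δ + p)^2 := by
      have step1 : ∫ ω, (y k ω + p)^2 * (I k ω - μv)^2 ∂P ≤ ∫ ω, (y k ω + p)^2 ∂P := by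
        apply integral_mono int3 int4
        intro ω
        dsimp only
        have h2 : (I k ω - μv)^2 ≤ 1 := by
          rcases h01 k ω with h | h <;> rw [h] <;> nlinarith
        nlinarith [sq_nonneg (y k ω + p)]
      have step2 : ∫ ω, (y k ω + p)^2 ∂P ≤ ∫ ω, (2 * (y k ω - Δ)^2 + 2 * (Δ + p)^2) ∂P := by
        apply integral_mono int4 ((int1.const_mul 2).add (integrable_const _))
        intro ω
        simp only [Pi.add_apply]
        nlinarith [sq_nonneg (y k ω - Δ - (Δ + p)), sq_nonneg (y k ω - Δ + (Δ + p))]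
      have step3 : ∫ ω, (2 * (y k ω - Δ)^2 + 2 * (Δ + p)^2) ∂P
          = 2 * (∫ ω, (y k ω - Δ)^2 ∂P) + 2 * (Δ + p)^2 := by
        rw [integral_add (int1.const_mul 2) (integrable_const _), integral_const_mul,
          integral_const]
        simp
      linarith
    -- expand the square
    have intA : Integrable (fun ω => (1 - a * ε)^2 * (y k ω - Δ)^2) P := int1.const_mul _
    have intB : Integrable (fun ω =>
        (2 * (1 - a * ε) * ε) * (((y k ω - Δ) * (y k ω + p)) * (I k ω - μv))) P :=
      intXY.const_mul _
    have intC : Integrable (fun ω => ε^2 * ((y k ω + p)^2 * (I k ω - μv)^2)) P :=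
      int3.const_mul _
    have intAB : Integrable (fun ω => (1 - a * ε)^2 * (y k ω - Δ)^2
        + (2 * (1 - a * ε) * ε) * (((y k ω - Δ) * (y k ω + p)) * (I k ω - μv))) P :=
      intA.add intB
    have hexp : ∫ ω, (y (k+1) ω - Δ)^2 ∂P
        = (1 - a * ε)^2 * (∫ ω, (y k ω - Δ)^2 ∂P)
          + ε^2 * ∫ ω, (y k ω + p)^2 * (I k ω - μv)^2 ∂P := by
      calc ∫ ω, (y (k+1) ω - Δ)^2 ∂P
          = ∫ ω, ((1 - a * ε)^2 * (y k ω - Δ)^2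
            + (2 * (1 - a * ε) * ε) * (((y k ω - Δ) * (y k ω + p)) * (I k ω - μv))
            + ε^2 * ((y k ω + p)^2 * (I k ω - μv)^2)) ∂P :=
            integral_congr_ae (ae_of_all _ hsum)
        _ = (1 - a * ε)^2 * (∫ ω, (y k ω - Δ)^2 ∂P)
            + (2 * (1 - a * ε) * ε) * (∫ ω, ((y k ω - Δ) * (y k ω + p)) * (I k ω - μv) ∂P)
            + ε^2 * ∫ ω, (y k ω + p)^2 * (I k ω - μv)^2 ∂P := by
            rw [integral_add intAB intC, integral_add intA intB,
              integral_const_mul, integral_const_mul, integral_const_mul]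
        _ = (1 - a * ε)^2 * (∫ ω, (y k ω - Δ)^2 ∂P)
            + ε^2 * ∫ ω, (y k ω + p)^2 * (I k ω - μv)^2 ∂P := by
            rw [hT1, mul_zero]; ring
    -- combine
    have hquad := hT2
    have hm0 := hmk0 k
    have hcoef : (1 - a * ε)^2 + 2 * ε^2 ≤ 1 - 2 * a * ε + 3 * ε^2 := by
      nlinarith [mul_nonneg (mul_nonneg (by nlinarith : (0:ℝ) ≤ 1 - a^2) hεp.le) hεp.le]
    have hq0 : 0 ≤ ∫ ω, (y k ω + p)^2 * (I k ω - μv)^2 ∂P :=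
      integral_nonneg fun ω => mul_nonneg (sq_nonneg _) (sq_nonneg _)
    rw [hexp]
    nlinarith [mul_le_mul_of_nonneg_left hquad (sq_nonneg ε),
      mul_le_mul_of_nonneg_right hcoef hm0]
  -- apply the rate lemma
  obtain ⟨C, hCpos, hCle⟩ := sa_rate_rec a η (2 * (Δ + p)^2) ha0 ha1.le hη0 hη1
    (by positivity) (fun k => ∫ ω, (y k ω - Δ)^2 ∂P) hmk0 hrecI
  refine ⟨Real.sqrt C, Real.sqrt_pos.2 hCpos, ?_⟩
  intro k hk
  have hk0 : (0:ℝ) < (k : ℝ) := by exact_mod_cast hk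
  have intAbs : Integrable (fun ω => y k ω - Δ) P :=
    hint _ ((4:ℝ) ^ k * (|y₀| + p) + |Δ|) ((hym k).sub measurable_const) (babs k)
  have h1 : ∫ ω, |y k ω - Δ| ∂P ≤ Real.sqrt (∫ ω, (y k ω - Δ)^2 ∂P) :=
    sa_abs_le_sqrt P _ intAbs (intSq k)
  have h2 : Real.sqrt (∫ ω, (y k ω - Δ)^2 ∂P) ≤ Real.sqrt (C * (k : ℝ) ^ (-η)) :=
    Real.sqrt_le_sqrt (hCle k hk)
  have h3 : Real.sqrt (C * (k : ℝ) ^ (-η)) = Real.sqrt C * (k : ℝ) ^ (-η / 2) := by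
    rw [Real.sqrt_mul hCpos.le, Real.sqrt_eq_rpow ((k:ℝ) ^ (-η)), ← Real.rpow_mul hk0.le,
      show (-η) * (1/2 : ℝ) = -η/2 by ring]
  calc ∫ ω, |y k ω - Δ| ∂P ≤ Real.sqrt (∫ ω, (y k ω - Δ)^2 ∂P) := h1
    _ ≤ Real.sqrt (C * (k : ℝ) ^ (-η)) := h2
    _ = Real.sqrt C * (k : ℝ) ^ (-η / 2) := h3
end
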